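/- arXiv:2507.09688 — 4 statements merged into one kernel-verified Lean document; each statement's English description precedes it below -/
import Mathlib

section
/- Let G be a two-terminal series-parallel graph with terminals (s, t), and let p*, p, and q be simple s-t paths in G. Suppose p intersects p* at a node v and q intersects p* at a node w, where v precedes w on p*. Then there exists a node ξ on the subpath of p* between v and w such that ξ lies on both p and q. -/
open MeasureTheory

/-- A network over time: a digraph with arc capacities `u`, costs `c`,
transit times `τ`, a source `s` and a sink `t`. -/
structure Network (V : Type) (A : Type) where
  tail : A → V
  head : A → V
  u : A → ℕ
  c : A → ℕ
  τ : A → ℕ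
  s : V
  t : V

namespace Network

variable {V A : Type}

/-- The node sequence visited by a list of arcs. -/
def nodes (N : Network V A) : List A → List V
  | [] => []
  | a :: rest => N.tail a :: ((a :: rest).map N.head)

/-- `p` is a simple `s`-`t` path (a non-empty list of consecutive arcs starting at
the source, ending at the sink and visiting pairwise distinct nodes). -/
def IsSTPath (N : Network V A) (p : List A) : Prop :=
  p ≠ [] ∧ List.Chain' (fun a b => N.head a = N.tail b) p ∧
    (∀ a ∈ p.head?, N.tail a = N.s) ∧ (∀ a ∈ p.getLast?, N.head a = N.t) ∧
    (N.nodes p).Nodup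

/-- `p` is a non-empty closed walk, i.e. a cycle. -/
def IsCycle (N : Network V A) (p : List A) : Prop :=
  p ≠ [] ∧ List.Chain' (fun a b => N.head a = N.tail b) p ∧
    ∀ a ∈ p.head?, ∀ b ∈ p.getLast?, N.head b = N.tail a

/-- The network contains no directed cycle. -/
def Acyclic (N : Network V A) : Prop := ∀ p : List A, ¬ N.IsCycle p

/-- Transit time (length) of a path. -/
def pathTime (N : Network V A) (p : List A) : ℕ := (p.map N.τ).sum

/-- Bottleneck capacity of a path. -/
noncomputable def bottleneck (N : Network V A) (p : List A) : ℕ :=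
  sInf (N.u '' {a | a ∈ p})

section
variable [DecidableEq A]

/-- Transit time of the part of `p` strictly before arc `a`. -/
def prefixTime (N : Network V A) (p : List A) (a : A) : ℕ :=
  ((p.takeWhile fun b => b ≠ a).map N.τ).sum

/-- Transit time of the part of `p` from arc `a` onwards. -/
def suffixTime (N : Network V A) (p : List A) (a : A) : ℕ :=
  ((p.dropWhile fun b => b ≠ a).map N.τ).sum

/-- Inflow rate into arc `a` at time `θ` of the temporally repeated flow with
horizon `T` induced by the path decomposition `y`. -/
noncomputable def trRate (N : Network V A) (y : List A → ℝ) (T : ℝ) (a : A) (θ : ℝ) : ℝ :=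
  ∑ᶠ p ∈ {p : List A | N.IsSTPath p ∧ (N.pathTime p : ℝ) ≤ T ∧ a ∈ p ∧
    (N.prefixTime p a : ℝ) ≤ θ ∧ (N.suffixTime p a : ℝ) < T - θ}, y p

/-- Static flow on arc `a` induced by the path decomposition `y`. -/
noncomputable def staticOf (N : Network V A) (y : List A → ℝ) (a : A) : ℝ :=
  ∑ᶠ p ∈ {p : List A | a ∈ p}, y p

/-- `y` is a feasible (capacity-respecting) path decomposition of a static flow. -/
def IsDecomposition (N : Network V A) (y : List A → ℝ) : Prop :=
  (∀ p, 0 ≤ y p) ∧ (∀ p, y p ≠ 0 → N.IsSTPath p) ∧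
    (Function.support y).Finite ∧ ∀ a : A, N.staticOf y a ≤ N.u a

/-- Value of the temporally repeated flow induced by `y` with horizon `T`. -/
noncomputable def trValue (N : Network V A) (y : List A → ℝ) (T : ℝ) : ℝ :=
  ∑ᶠ p ∈ {p : List A | N.IsSTPath p ∧ (N.pathTime p : ℝ) ≤ T}, y p * (T - N.pathTime p)

/-- Amount of flow of the TR flow induced by `y` that has reached the sink by time `θ`. -/
noncomputable def arrTR (N : Network V A) (y : List A → ℝ) (θ : ℝ) : ℝ :=
  ∑ᶠ p ∈ {p : List A | N.IsSTPath p ∧ (N.pathTime p : ℝ) ≤ θ}, y p * (θ - N.pathTime p)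

end

/-- All flow rates of the decomposition are (nonnegative) integers. -/
def IsIntegral (y : List A → ℝ) : Prop := ∀ p, ∃ n : ℕ, y p = n

section
variable [Fintype A]

/-- Cost of a flow over time `f` at time point `θ`. -/
noncomputable def costAt (N : Network V A) (f : A → ℝ → ℝ) (θ : ℝ) : ℝ :=
  ∑ a : A, (N.c a : ℝ) * ∫ ξ in (θ - (N.τ a : ℝ))..θ, f a ξ

/-- Peak cost of a flow over time `f` with horizon `T`. -/
noncomputable def peakCost (N : Network V A) (f : A → ℝ → ℝ) (T : ℝ) : ℝ :=
  sSup (N.costAt f '' Set.Ico 0 T)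

/-- Peak cost of the TR flow induced by the decomposition `y`. -/
noncomputable def trPeakCost [DecidableEq A] (N : Network V A) (y : List A → ℝ) (T : ℝ) : ℝ :=
  N.peakCost (N.trRate y T) T

variable [DecidableEq V]

/-- Cumulative flow having entered node `v` by time `θ`. -/
noncomputable def inflowBy (N : Network V A) (f : A → ℝ → ℝ) (v : V) (θ : ℝ) : ℝ :=
  ∑ a ∈ Finset.univ.filter (fun a => N.head a = v), ∫ ξ in (0:ℝ)..(θ - (N.τ a : ℝ)), f a ξ

/-- Cumulative flow having left node `v` by time `θ`. -/
noncomputable def outflowBy (N : Network V A) (f : A → ℝ → ℝ) (v : V) (θ : ℝ) : ℝ :=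
  ∑ a ∈ Finset.univ.filter (fun a => N.tail a = v), ∫ ξ in (0:ℝ)..θ, f a ξ

/-- A feasible flow over time with horizon `T`. -/
def IsFlowOverTime (N : Network V A) (T : ℝ) (f : A → ℝ → ℝ) : Prop :=
  (∀ a, Measurable (f a)) ∧ (∀ a θ, 0 ≤ f a θ) ∧ (∀ a θ, f a θ ≤ N.u a) ∧
    (∀ a θ, T - (N.τ a : ℝ) < θ → f a θ = 0) ∧ (∀ a θ, θ < 0 → f a θ = 0) ∧
    ∀ v, v ≠ N.s → v ≠ N.t → ∀ θ ∈ Set.Ico (0:ℝ) T,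
      N.outflowBy f v θ ≤ N.inflowBy f v θ

/-- Value of a flow over time with horizon `T`. -/
noncomputable def fotValue (N : Network V A) (T : ℝ) (f : A → ℝ → ℝ) : ℝ :=
  N.outflowBy f N.s T - N.inflowBy f N.s T

/-- Amount of flow of a flow over time arrived at the sink by time `θ`. -/
noncomputable def arrivedBy (N : Network V A) (f : A → ℝ → ℝ) (θ : ℝ) : ℝ :=
  N.inflowBy f N.t θ - N.outflowBy f N.t θ

/-- Feasibility of a static `s`-`t` flow. -/
def IsStaticFlow (N : Network V A) (x : A → ℝ) : Prop :=
  (∀ a, 0 ≤ x a) ∧ (∀ a, x a ≤ N.u a) ∧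
    ∀ v, v ≠ N.s → v ≠ N.t →
      ∑ a ∈ Finset.univ.filter (fun a => N.head a = v), x a =
      ∑ a ∈ Finset.univ.filter (fun a => N.tail a = v), x a

/-- Value of a static `s`-`t` flow. -/
noncomputable def staticValue (N : Network V A) (x : A → ℝ) : ℝ :=
  ∑ a ∈ Finset.univ.filter (fun a => N.tail a = N.s), x a -
  ∑ a ∈ Finset.univ.filter (fun a => N.head a = N.s), x a

end

end Network

/-- Syntax trees of two-terminal series-parallel graphs. -/
inductive SPTerm : Type
  | edge : SPTerm
  | series : SPTerm → SPTerm → SPTerm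
  | parallel : SPTerm → SPTerm → SPTerm

namespace SPTerm

/-- Arc type of the graph described by a series-parallel term. -/
def Arcs : SPTerm → Type
  | edge => Unit
  | series x y => x.Arcs ⊕ y.Arcs
  | parallel x y => x.Arcs ⊕ y.Arcs

/-- Inner (non-terminal) node type of the graph described by a series-parallel term.
In a series composition the extra `Unit` node is the merged sink/source. -/
def Inner : SPTerm → Type
  | edge => Empty
  | series x y => x.Inner ⊕ (Unit ⊕ y.Inner)
  | parallel x y => x.Inner ⊕ y.Inner

/-- Node type: the inner nodes together with the two terminals
(`Sum.inr false` is the source, `Sum.inr true` the sink). -/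
def Node (x : SPTerm) : Type := x.Inner ⊕ Bool

/-- Embedding of the nodes of the left factor into a series composition. -/
def seriesLeft {x y : SPTerm} : x.Node → (x.series y).Node
  | Sum.inl i => Sum.inl (Sum.inl i)
  | Sum.inr false => Sum.inr false
  | Sum.inr true => Sum.inl (Sum.inr (Sum.inl ()))

/-- Embedding of the nodes of the right factor into a series composition. -/
def seriesRight {x y : SPTerm} : y.Node → (x.series y).Node
  | Sum.inl i => Sum.inl (Sum.inr (Sum.inr i))
  | Sum.inr false => Sum.inl (Sum.inr (Sum.inl ()))
  | Sum.inr true => Sum.inr true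

/-- Embedding of the nodes of the left factor into a parallel composition. -/
def parallelLeft {x y : SPTerm} : x.Node → (x.parallel y).Node
  | Sum.inl i => Sum.inl (Sum.inl i)
  | Sum.inr b => Sum.inr b

/-- Embedding of the nodes of the right factor into a parallel composition. -/
def parallelRight {x y : SPTerm} : y.Node → (x.parallel y).Node
  | Sum.inl i => Sum.inl (Sum.inr i)
  | Sum.inr b => Sum.inr b

/-- Tail of an arc of the graph described by a series-parallel term. -/
def tl : (x : SPTerm) → x.Arcs → x.Node
  | edge, _ => Sum.inr false
  | series x y, Sum.inl a => seriesLeft (x.tl a)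
  | series x y, Sum.inr a => seriesRight (y.tl a)
  | parallel x y, Sum.inl a => parallelLeft (x.tl a)
  | parallel x y, Sum.inr a => parallelRight (y.tl a)

/-- Head of an arc of the graph described by a series-parallel term. -/
def hd : (x : SPTerm) → x.Arcs → x.Node
  | edge, _ => Sum.inr true
  | series x y, Sum.inl a => seriesLeft (x.hd a)
  | series x y, Sum.inr a => seriesRight (y.hd a)
  | parallel x y, Sum.inl a => parallelLeft (x.hd a)
  | parallel x y, Sum.inr a => parallelRight (y.hd a)

end SPTerm

/-- A network is two-terminal series-parallel with terminals `(s, t)` if its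
underlying digraph is isomorphic to the graph of some series-parallel term, with
`s` and `t` mapped to the two terminals. -/
def Network.IsSeriesParallel {V A : Type} (N : Network V A) : Prop :=
  ∃ (x : SPTerm) (eV : V ≃ x.Node) (eA : A ≃ x.Arcs),
    (∀ a, eV (N.tail a) = x.tl (eA a)) ∧ (∀ a, eV (N.head a) = x.hd (eA a)) ∧
    eV N.s = Sum.inr false ∧ eV N.t = Sum.inr true

open Network

/-! ### Auxiliary development for Statement 10 -/

section ListAux

variable {α β : Type}

lemma aux_sublist_left_of_forall_not_mem {l l₁ l₂ : List α}
    (h : l.Sublist (l₁ ++ l₂)) (h2 : ∀ a ∈ l, a ∉ l₂) : l.Sublist l₁ := by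
  rw [List.sublist_append_iff] at h
  obtain ⟨m₁, m₂, rfl, hm₁, hm₂⟩ := h
  cases m₂ with
  | nil => simpa using hm₁
  | cons b t => exact absurd (hm₂.subset (List.mem_cons_self)) (h2 b (by simp))

lemma aux_sublist_right_of_forall_not_mem {l l₁ l₂ : List α}
    (h : l.Sublist (l₁ ++ l₂)) (h2 : ∀ a ∈ l, a ∉ l₁) : l.Sublist l₂ := by
  rw [List.sublist_append_iff] at h
  obtain ⟨m₁, m₂, rfl, hm₁, hm₂⟩ := h
  cases m₁ with
  | nil => simpa using hm₂
  | cons b t => exact absurd (hm₁.subset (List.mem_cons_self)) (h2 b (by simp))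

lemma aux_sublist_pair_of_mem_getLast {l : List α} {a b : α} (ha : a ∈ l)
    (hb : l.getLast? = some b) (hne : a ≠ b) : [a, b].Sublist l := by
  have hdl := List.dropLast_append_getLast? b hb
  rw [← hdl] at ha ⊢
  rcases List.mem_append.1 ha with h | h
  · exact (List.singleton_sublist.2 h).append (List.Sublist.refl [b])
  · simp only [List.mem_singleton] at h
    exact absurd h hne

lemma aux_sublist_pair_of_mem_head {l : List α} {a b : α} (ha : a ∈ l)
    (hb : l.head? = some b) (hne : a ≠ b) : [b, a].Sublist l := by
  cases l with
  | nil => simp at hb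
  | cons c t =>
    have hcb : c = b := by simpa using hb
    rcases List.mem_cons.1 ha with h | h
    · exact absurd (h.trans hcb) hne
    · rw [← hcb]
      exact (List.singleton_sublist.2 h).cons₂ c

lemma aux_not_sublist_pair_getLast {l : List α} {b w : α} (hnd : l.Nodup)
    (hb : l.getLast? = some b) (h : [b, w].Sublist l) : False := by
  rw [List.cons_sublist_iff] at h
  obtain ⟨r₁, r₂, rfl, hb1, hw⟩ := h
  have hw' : w ∈ r₂ := hw.subset List.mem_cons_self
  have hr₂ : r₂ ≠ [] := fun hh => by simp [hh] at hw'
  rw [List.getLast?_append, List.getLast?_eq_getLast hr₂] at hb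
  simp only [Option.some_or, Option.some_inj] at hb
  have hbr₂ : b ∈ r₂ := hb ▸ List.getLast_mem hr₂
  exact (List.disjoint_of_nodup_append hnd) hb1 hbr₂

lemma aux_not_sublist_pair_head {l : List α} {b v : α} (hnd : l.Nodup)
    (hb : l.head? = some b) (h : [v, b].Sublist l) : False := by
  cases l with
  | nil => simp at hb
  | cons c t =>
    have hcb : c = b := by simpa using hb
    have hbt : b ∉ t := hcb ▸ (List.nodup_cons.1 hnd).1
    rw [List.sublist_cons_iff] at h
    rcases h with h | ⟨r, hr, h⟩
    · exact hbt (h.subset (by simp))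
    · rw [List.cons.injEq] at hr
      obtain ⟨-, hr⟩ := hr
      exact hbt (h.subset (hr ▸ (List.mem_cons_self (a := b) (l := []))))

lemma aux_sublist_of_map_sublist {f : α → β} (hf : Function.Injective f)
    {l l' : List α} (h : (l.map f).Sublist (l'.map f)) : l.Sublist l' := by
  rw [List.sublist_map_iff] at h
  obtain ⟨m, hm, he⟩ := h
  obtain rfl := List.map_injective_iff.2 hf he
  exact hm

lemma aux_chain'_sum_split {R : α ⊕ β → α ⊕ β → Prop} :
    ∀ {p : List (α ⊕ β)}, List.Chain' R p →
    (∀ a b, ¬ R (Sum.inr a) (Sum.inl b)) →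
    ∃ (l₁ : List α) (l₂ : List β), p = l₁.map Sum.inl ++ l₂.map Sum.inr := by
  intro p
  induction p with
  | nil => exact fun _ _ => ⟨[], [], rfl⟩
  | cons a t ih =>
    intro h hno
    obtain ⟨l₁, l₂, rfl⟩ := ih h.tail hno
    cases a with
    | inl a => exact ⟨a :: l₁, l₂, rfl⟩
    | inr a =>
      cases l₁ with
      | nil => exact ⟨[], a :: l₂, rfl⟩
      | cons b l₁ =>
        rw [List.map_cons, List.cons_append] at h
        exact absurd h.rel_head (hno a b)

end ListAux

attribute [reducible] SPTerm.Node SPTerm.Inner SPTerm.Arcs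

namespace SPTerm

variable {x y : SPTerm}

/-- The network associated with a series-parallel term (capacities etc. are irrelevant). -/
def net (x : SPTerm) : Network x.Node x.Arcs :=
  ⟨x.tl, x.hd, fun _ => 0, fun _ => 0, fun _ => 0, Sum.inr false, Sum.inr true⟩

@[simp] lemma net_tail (a : x.Arcs) : (net x).tail a = x.tl a := rfl
@[simp] lemma net_head (a : x.Arcs) : (net x).head a = x.hd a := rfl
@[simp] lemma net_s : (net x).s = Sum.inr false := rfl
@[simp] lemma net_t : (net x).t = Sum.inr true := rfl

lemma seriesLeft_inj : Function.Injective (@seriesLeft x y) :=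
  Function.LeftInverse.injective (g := fun n => match n with
    | Sum.inl (Sum.inl i) => Sum.inl i
    | Sum.inr false => Sum.inr false
    | _ => Sum.inr true) (by rintro (i | (_ | _)) <;> rfl)

lemma seriesRight_inj : Function.Injective (@seriesRight x y) :=
  Function.LeftInverse.injective (g := fun n => match n with
    | Sum.inl (Sum.inr (Sum.inr j)) => Sum.inl j
    | Sum.inl (Sum.inr (Sum.inl _)) => Sum.inr false
    | _ => Sum.inr true) (by rintro (i | (_ | _)) <;> rfl)

lemma parallelLeft_inj : Function.Injective (@parallelLeft x y) :=
  Function.LeftInverse.injective (g := fun n => match n with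
    | Sum.inl (Sum.inl i) => Sum.inl i
    | Sum.inl (Sum.inr _) => Sum.inr true
    | Sum.inr b => Sum.inr b) (by rintro (i | (_ | _)) <;> rfl)

lemma parallelRight_inj : Function.Injective (@parallelRight x y) :=
  Function.LeftInverse.injective (g := fun n => match n with
    | Sum.inl (Sum.inr i) => Sum.inl i
    | Sum.inl (Sum.inl _) => Sum.inr true
    | Sum.inr b => Sum.inr b) (by rintro (i | (_ | _)) <;> rfl)

@[simp] lemma seriesLeft_eq_source {n : x.Node} :
    (seriesLeft n : (x.series y).Node) = Sum.inr false ↔ n = Sum.inr false := by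
  rcases n with i | (_ | _) <;> simp [seriesLeft]

@[simp] lemma seriesLeft_ne_sink {n : x.Node} :
    (seriesLeft n : (x.series y).Node) ≠ Sum.inr true := by
  rcases n with i | (_ | _) <;> simp [seriesLeft]

@[simp] lemma seriesRight_eq_sink {n : y.Node} :
    (seriesRight n : (x.series y).Node) = Sum.inr true ↔ n = Sum.inr true := by
  rcases n with i | (_ | _) <;> simp [seriesRight]

@[simp] lemma seriesRight_ne_source {n : y.Node} :
    (seriesRight n : (x.series y).Node) ≠ Sum.inr false := by
  rcases n with i | (_ | _) <;> simp [seriesRight]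

lemma seriesLeft_eq_seriesRight {n : x.Node} {n' : y.Node} :
    (seriesLeft n : (x.series y).Node) = seriesRight n' ↔
      n = Sum.inr true ∧ n' = Sum.inr false := by
  rcases n with i | (_ | _) <;> rcases n' with j | (_ | _) <;>
    simp [seriesLeft, seriesRight]

@[simp] lemma parallelLeft_eq_inr {n : x.Node} {b : Bool} :
    (parallelLeft n : (x.parallel y).Node) = Sum.inr b ↔ n = Sum.inr b := by
  rcases n with i | c <;> simp [parallelLeft]

@[simp] lemma parallelRight_eq_inr {n : y.Node} {b : Bool} :
    (parallelRight n : (x.parallel y).Node) = Sum.inr b ↔ n = Sum.inr b := by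
  rcases n with i | c <;> simp [parallelRight]

lemma parallelLeft_eq_parallelRight {n : x.Node} {n' : y.Node} :
    (parallelLeft n : (x.parallel y).Node) = parallelRight n' ↔
      ∃ b, n = Sum.inr b ∧ n' = Sum.inr b := by
  rcases n with i | c <;> rcases n' with j | d <;> simp [parallelLeft, parallelRight] <;>
    exact eq_comm

lemma hd_ne_source : ∀ (x : SPTerm) (a : x.Arcs), x.hd a ≠ Sum.inr false := by
  intro x
  induction x with
  | edge => intro a; simp [hd]
  | series x y ihx ihy =>
    rintro (a | a) h
    · rw [show (x.series y).hd (Sum.inl a) = seriesLeft (x.hd a) from rfl,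
        seriesLeft_eq_source] at h
      exact ihx a h
    · exact seriesRight_ne_source h
  | parallel x y ihx ihy =>
    rintro (a | a) h
    · rw [show (x.parallel y).hd (Sum.inl a) = parallelLeft (x.hd a) from rfl,
        parallelLeft_eq_inr] at h
      exact ihx a h
    · rw [show (x.parallel y).hd (Sum.inr a) = parallelRight (y.hd a) from rfl,
        parallelRight_eq_inr] at h
      exact ihy a h

lemma tl_ne_sink : ∀ (x : SPTerm) (a : x.Arcs), x.tl a ≠ Sum.inr true := by
  intro x
  induction x with
  | edge => intro a; simp [tl]
  | series x y ihx ihy =>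
    rintro (a | a) h
    · exact seriesLeft_ne_sink h
    · rw [show (x.series y).tl (Sum.inr a) = seriesRight (y.tl a) from rfl,
        seriesRight_eq_sink] at h
      exact ihy a h
  | parallel x y ihx ihy =>
    rintro (a | a) h
    · rw [show (x.parallel y).tl (Sum.inl a) = parallelLeft (x.tl a) from rfl,
        parallelLeft_eq_inr] at h
      exact ihx a h
    · rw [show (x.parallel y).tl (Sum.inr a) = parallelRight (y.tl a) from rfl,
        parallelRight_eq_inr] at h
      exact ihy a h

end SPTerm

section Transfer

open SPTerm

variable {V A V' A' : Type}

lemma aux_nodes_map (N : Network V A) (N' : Network V' A') (φV : V → V') (φA : A → A')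
    (ht : ∀ a, N'.tail (φA a) = φV (N.tail a)) (hh : ∀ a, N'.head (φA a) = φV (N.head a))
    (p : List A) : N'.nodes (p.map φA) = (N.nodes p).map φV := by
  cases p with
  | nil => rfl
  | cons a t => simp [Network.nodes, ht, hh, Function.comp]

lemma aux_isSTPath_map_iff {N : Network V A} {N' : Network V' A'}
    {φV : V → V'} {φA : A → A'} (hV : Function.Injective φV)
    (ht : ∀ a, N'.tail (φA a) = φV (N.tail a)) (hh : ∀ a, N'.head (φA a) = φV (N.head a))
    (hs : φV N.s = N'.s) (hT : φV N.t = N'.t)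
    {p : List A} : N'.IsSTPath (p.map φA) ↔ N.IsSTPath p := by
  constructor
  · rintro ⟨hne, hch, hhd, hlast, hnd⟩
    refine ⟨by simpa using hne, ?_, ?_, ?_, ?_⟩
    · unfold List.Chain' at hch ⊢
      rw [List.isChain_map] at hch
      exact hch.imp fun a b hab => hV (by rw [← ht, ← hh, hab])
    · intro a ha
      have := hhd (φA a) (by rw [List.head?_map, ha]; rfl)
      rw [ht, ← hs] at this
      exact hV this
    · intro a ha
      have := hlast (φA a) (by rw [List.getLast?_map, ha]; rfl)
      rw [hh, ← hT] at this
      exact hV this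
    · rw [aux_nodes_map N N' φV φA ht hh] at hnd
      exact hnd.of_map φV
  · rintro ⟨hne, hch, hhd, hlast, hnd⟩
    refine ⟨by simpa using hne, ?_, ?_, ?_, ?_⟩
    · unfold List.Chain' at hch ⊢
      rw [List.isChain_map]
      exact hch.imp fun a b hab => by rw [ht, hh, hab]
    · intro a ha
      rw [List.head?_map, Option.mem_def, Option.map_eq_some_iff] at ha
      obtain ⟨a₀, ha₀, rfl⟩ := ha
      rw [ht, hhd a₀ ha₀, hs]
    · intro a ha
      rw [List.getLast?_map, Option.mem_def, Option.map_eq_some_iff] at ha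
      obtain ⟨a₀, ha₀, rfl⟩ := ha
      rw [hh, hlast a₀ ha₀, hT]
    · rw [aux_nodes_map N N' φV φA ht hh]
      exact hnd.map hV

end Transfer

namespace SPTerm

variable {x y : SPTerm}

lemma nodes_eq_cons {z : SPTerm} {r : List z.Arcs} (hr : (net z).IsSTPath r) :
    (net z).nodes r = Sum.inr false :: r.map z.hd := by
  obtain ⟨hne, -, hhd, -, -⟩ := hr
  cases r with
  | nil => exact absurd rfl hne
  | cons a t =>
    have h0 : (net z).tail a = (net z).s := hhd a rfl
    simp only [Network.nodes, net_head]
    rw [h0]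
    rfl

lemma nodes_head? {z : SPTerm} {r : List z.Arcs} (hr : (net z).IsSTPath r) :
    ((net z).nodes r).head? = some (Sum.inr false) := by
  rw [nodes_eq_cons hr]; rfl

lemma nodes_getLast? {z : SPTerm} {r : List z.Arcs} (hr : (net z).IsSTPath r) :
    ((net z).nodes r).getLast? = some (Sum.inr true) := by
  have hcons := nodes_eq_cons hr
  obtain ⟨hne, -, -, hlast, -⟩ := hr
  have hml : r.getLast? = some (r.getLast hne) := List.getLast?_eq_getLast hne
  have hmem : z.hd (r.getLast hne) = Sum.inr true := hlast _ hml
  rw [hcons, ← List.singleton_append, List.getLast?_append, List.getLast?_map, hml]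
  simp [hmem]

lemma source_mem_nodes {z : SPTerm} {r : List z.Arcs} (hr : (net z).IsSTPath r) :
    (Sum.inr false : z.Node) ∈ (net z).nodes r := by
  rw [nodes_eq_cons hr]; exact List.mem_cons_self

lemma sink_mem_nodes {z : SPTerm} {r : List z.Arcs} (hr : (net z).IsSTPath r) :
    (Sum.inr true : z.Node) ∈ (net z).nodes r :=
  List.mem_of_getLast? (nodes_getLast? hr)

lemma nodes_edge {r : List SPTerm.edge.Arcs} (hr : (net SPTerm.edge).IsSTPath r) :
    (net SPTerm.edge).nodes r = [Sum.inr false, Sum.inr true] := by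
  have hcons := nodes_eq_cons hr
  obtain ⟨hne, -, -, -, hnd⟩ := hr
  cases r with
  | nil => exact absurd rfl hne
  | cons a t =>
    cases t with
    | nil => rw [hcons]; rfl
    | cons b t =>
      exfalso
      rw [hcons] at hnd
      have h1 : SPTerm.edge.hd a = Sum.inr true := rfl
      have h2 : SPTerm.edge.hd b = Sum.inr true := rfl
      simp [h1, h2, List.nodup_cons] at hnd

/-- The middle (merged) node of a series composition. -/
def mid (x y : SPTerm) : (x.series y).Node := Sum.inl (Sum.inr (Sum.inl ()))

@[simp] lemma seriesLeft_sink : (seriesLeft (Sum.inr true) : (x.series y).Node) = mid x y := rfl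

@[simp] lemma seriesRight_source :
    (seriesRight (Sum.inr false) : (x.series y).Node) = mid x y := rfl

lemma node_trichotomy (n : (x.series y).Node) :
    n = mid x y ∨ (∃ z, n = seriesLeft z ∧ z ≠ Sum.inr true) ∨
      (∃ z, n = seriesRight z ∧ z ≠ Sum.inr false) := by
  rcases n with (i | (⟨⟩ | j)) | (_ | _)
  · exact Or.inr (Or.inl ⟨Sum.inl i, rfl, by simp⟩)
  · exact Or.inl rfl
  · exact Or.inr (Or.inr ⟨Sum.inl j, rfl, by simp⟩)
  · exact Or.inr (Or.inl ⟨Sum.inr false, rfl, by simp⟩)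
  · exact Or.inr (Or.inr ⟨Sum.inr true, rfl, by simp⟩)

lemma seriesLeft_not_mem_map_right {z : x.Node} (hz : z ≠ Sum.inr true) (l : List y.Node) :
    (seriesLeft z : (x.series y).Node) ∉ l.map seriesRight := by
  simp only [List.mem_map, not_exists, not_and]
  intro n _ h
  exact hz (seriesLeft_eq_seriesRight.1 h.symm).1

lemma seriesRight_not_mem_map_left {z : y.Node} (hz : z ≠ Sum.inr false) (l : List x.Node) :
    (seriesRight z : (x.series y).Node) ∉ l.map seriesLeft := by
  simp only [List.mem_map, not_exists, not_and]
  intro n _ h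
  exact hz (seriesLeft_eq_seriesRight.1 h).2

/-! #### Parallel composition -/

lemma nodes_parallel_inl (l : List x.Arcs) :
    (net (x.parallel y)).nodes (l.map Sum.inl) = ((net x).nodes l).map parallelLeft :=
  aux_nodes_map (net x) (net (x.parallel y)) parallelLeft Sum.inl (fun _ => rfl) (fun _ => rfl) l

lemma nodes_parallel_inr (l : List y.Arcs) :
    (net (x.parallel y)).nodes (l.map Sum.inr) = ((net y).nodes l).map parallelRight :=
  aux_nodes_map (net y) (net (x.parallel y)) parallelRight Sum.inr (fun _ => rfl) (fun _ => rfl) l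

lemma isSTPath_parallel_inl {l : List x.Arcs} :
    (net (x.parallel y)).IsSTPath (l.map Sum.inl) ↔ (net x).IsSTPath l :=
  aux_isSTPath_map_iff parallelLeft_inj (fun _ => rfl) (fun _ => rfl) rfl rfl

lemma isSTPath_parallel_inr {l : List y.Arcs} :
    (net (x.parallel y)).IsSTPath (l.map Sum.inr) ↔ (net y).IsSTPath l :=
  aux_isSTPath_map_iff parallelRight_inj (fun _ => rfl) (fun _ => rfl) rfl rfl

lemma parallel_decomp {p : List (x.parallel y).Arcs}
    (h : (net (x.parallel y)).IsSTPath p) :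
    (∃ p', p = p'.map Sum.inl ∧ (net x).IsSTPath p') ∨
    (∃ p', p = p'.map Sum.inr ∧ (net y).IsSTPath p') := by
  obtain ⟨l₁, l₂, rfl⟩ := aux_chain'_sum_split (α := x.Arcs) (β := y.Arcs) h.2.1
    (by
      intro a b hab
      have hab' : parallelRight (y.hd a) = parallelLeft (x.tl b) := hab
      obtain ⟨bb, h1, h2⟩ := parallelLeft_eq_parallelRight.1 hab'.symm
      cases bb
      · exact hd_ne_source y a h2
      · exact tl_ne_sink x b h1)
  cases l₂ with
  | nil =>
    simp only [List.map_nil, List.append_nil] at h ⊢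
    exact Or.inl ⟨l₁, rfl, isSTPath_parallel_inl.1 h⟩
  | cons b t₂ =>
    cases l₁ with
    | nil =>
      simp only [List.map_nil, List.nil_append] at h ⊢
      exact Or.inr ⟨b :: t₂, rfl, isSTPath_parallel_inr.1 h⟩
    | cons a t₁ =>
      exfalso
      obtain ⟨-, hch, -, -, -⟩ := h
      unfold List.Chain' at hch
      rw [List.isChain_append] at hch
      obtain ⟨-, -, hbd⟩ := hch
      have hlast : ((a :: t₁).map (Sum.inl : x.Arcs → (x.parallel y).Arcs)).getLast? =
          some (Sum.inl ((a :: t₁).getLast (List.cons_ne_nil a t₁))) := by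
        rw [List.getLast?_map, List.getLast?_eq_getLast (List.cons_ne_nil a t₁)]; rfl
      have hb := hbd _ hlast (Sum.inr b) rfl
      have hb' : parallelLeft (x.hd ((a :: t₁).getLast (List.cons_ne_nil a t₁))) =
          parallelRight (y.tl b) := hb
      obtain ⟨bb, h1, h2⟩ := parallelLeft_eq_parallelRight.1 hb'
      cases bb
      · exact hd_ne_source x _ h1
      · exact tl_ne_sink y b h2

end SPTerm

namespace SPTerm

variable {x y : SPTerm}

/-! #### Series composition -/

lemma nodes_series_append {p₁ : List x.Arcs} {p₂ : List y.Arcs} (h₁ : p₁ ≠ []) :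
    (net (x.series y)).nodes (p₁.map Sum.inl ++ p₂.map Sum.inr) =
      ((net x).nodes p₁).map seriesLeft ++ p₂.map (fun b => seriesRight (y.hd b)) := by
  cases p₁ with
  | nil => exact absurd rfl h₁
  | cons a t =>
    simp only [List.map_cons, List.cons_append, Network.nodes, List.map_append,
      List.map_map, net_head, net_tail, List.map_cons]
    rfl

lemma map_seriesRight_nodes {p₂ : List y.Arcs} (hp₂ : (net y).IsSTPath p₂) :
    ((net y).nodes p₂).map (@seriesRight x y) =
      mid x y :: p₂.map (fun b => seriesRight (y.hd b)) := by
  rw [nodes_eq_cons hp₂]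
  simp [Function.comp]

lemma map_seriesLeft_nodes {p₁ : List x.Arcs} (hp₁ : (net x).IsSTPath p₁) :
    ((net x).nodes p₁).map (@seriesLeft x y) =
      (((net x).nodes p₁).map seriesLeft).dropLast ++ [mid x y] := by
  have h1 : (((net x).nodes p₁).map (@seriesLeft x y)).getLast? = some (mid x y) := by
    rw [List.getLast?_map, nodes_getLast? hp₁]; rfl
  exact (List.dropLast_append_getLast? _ h1).symm

lemma nodes_series_append' {p₁ : List x.Arcs} {p₂ : List y.Arcs}
    (hp₁ : (net x).IsSTPath p₁) (hp₂ : (net y).IsSTPath p₂) :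
    (net (x.series y)).nodes (p₁.map Sum.inl ++ p₂.map Sum.inr) =
      (((net x).nodes p₁).map seriesLeft).dropLast ++ ((net y).nodes p₂).map seriesRight := by
  rw [nodes_series_append hp₁.1, map_seriesRight_nodes hp₂]
  conv_lhs => rw [map_seriesLeft_nodes hp₁]
  simp [List.append_assoc]

lemma series_decomp {p : List (x.series y).Arcs}
    (h : (net (x.series y)).IsSTPath p) :
    ∃ p₁ p₂, p = p₁.map Sum.inl ++ p₂.map Sum.inr ∧
      (net x).IsSTPath p₁ ∧ (net y).IsSTPath p₂ := by
  obtain ⟨p₁, p₂, rfl⟩ := aux_chain'_sum_split (α := x.Arcs) (β := y.Arcs) h.2.1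
    (by
      intro a b hab
      have hab' : seriesRight (y.hd a) = seriesLeft (x.tl b) := hab
      exact tl_ne_sink x b (seriesLeft_eq_seriesRight.1 hab'.symm).1)
  obtain ⟨hne, hch, hhd, hlast, hnd⟩ := h
  -- p₁ is nonempty
  cases p₁ with
  | nil =>
    exfalso
    simp only [List.map_nil, List.nil_append] at hne hhd
    cases p₂ with
    | nil => exact hne rfl
    | cons b t =>
      have h0 : (net (x.series y)).tail (Sum.inr b) = Sum.inr false := hhd _ rfl
      have h0' : seriesRight (y.tl b) = Sum.inr false := h0
      exact seriesRight_ne_source h0'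
  | cons a t₁ =>
  -- p₂ is nonempty
  cases p₂ with
  | nil =>
    exfalso
    simp only [List.map_nil, List.append_nil] at hlast
    have hml : ((a :: t₁).map (Sum.inl : x.Arcs → (x.series y).Arcs)).getLast? =
        some (Sum.inl ((a :: t₁).getLast (List.cons_ne_nil a t₁))) := by
      rw [List.getLast?_map, List.getLast?_eq_getLast (List.cons_ne_nil a t₁)]; rfl
    have h0 : (net (x.series y)).head (Sum.inl ((a :: t₁).getLast (List.cons_ne_nil a t₁)))
        = Sum.inr true := hlast _ hml
    have h0' : seriesLeft (x.hd ((a :: t₁).getLast (List.cons_ne_nil a t₁)))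
        = Sum.inr true := h0
    exact seriesLeft_ne_sink h0'
  | cons b t₂ =>
  set q₁ : List x.Arcs := a :: t₁ with hq₁
  set q₂ : List y.Arcs := b :: t₂ with hq₂
  have hq₁ne : q₁ ≠ [] := List.cons_ne_nil a t₁
  have hq₂ne : q₂ ≠ [] := List.cons_ne_nil b t₂
  unfold List.Chain' at hch
  rw [List.isChain_append] at hch
  obtain ⟨hch₁, hch₂, hbd⟩ := hch
  -- the boundary condition
  have hml : (q₁.map (Sum.inl : x.Arcs → (x.series y).Arcs)).getLast? =
      some (Sum.inl (q₁.getLast hq₁ne)) := by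
    rw [List.getLast?_map, List.getLast?_eq_getLast hq₁ne]; rfl
  have hb0 := hbd _ hml (Sum.inr b) rfl
  have hb' : seriesLeft (x.hd (q₁.getLast hq₁ne)) = seriesRight (y.tl b) := hb0
  obtain ⟨hb1, hb2⟩ := seriesLeft_eq_seriesRight.1 hb'
  -- nodup of the decomposed node list
  rw [nodes_series_append hq₁ne] at hnd
  have hnd₁ : ((net x).nodes q₁).Nodup :=
    ((List.nodup_append.1 hnd).1).of_map _
  have hnd₂r : (q₂.map fun c => (seriesRight (y.hd c) : (x.series y).Node)).Nodup :=
    (List.nodup_append.1 hnd).2.1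
  refine ⟨q₁, q₂, rfl, ⟨hq₁ne, ?_, ?_, ?_, hnd₁⟩, ⟨hq₂ne, ?_, ?_, ?_, ?_⟩⟩
  · -- chain' of q₁
    rw [List.isChain_map] at hch₁
    exact hch₁.imp fun c d hcd => seriesLeft_inj (hcd : seriesLeft (x.hd c) = seriesLeft (x.tl d))
  · -- head of q₁ at source
    intro c hc
    have hhq : q₁.head? = some a := rfl
    rw [hhq, Option.mem_def, Option.some_inj] at hc
    have h0 : (net (x.series y)).tail (Sum.inl a) = Sum.inr false := hhd _ rfl
    have h0' : seriesLeft (x.tl a) = Sum.inr false := h0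
    rw [← hc]
    exact seriesLeft_eq_source.1 h0'
  · -- last of q₁ at sink
    intro c hc
    rw [Option.mem_def, List.getLast?_eq_getLast hq₁ne, Option.some_inj] at hc
    rw [← hc]
    exact hb1
  · -- chain' of q₂
    rw [List.isChain_map] at hch₂
    exact hch₂.imp fun c d hcd =>
      seriesRight_inj (hcd : seriesRight (y.hd c) = seriesRight (y.tl d))
  · -- head of q₂ at source
    intro c hc
    have hhq : q₂.head? = some b := rfl
    rw [hhq, Option.mem_def, Option.some_inj] at hc
    rw [← hc]
    exact hb2
  · -- last of q₂ at sink
    intro c hc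
    have hml₂ : ((q₁.map (Sum.inl : x.Arcs → (x.series y).Arcs)) ++
        q₂.map Sum.inr).getLast? = some (Sum.inr (q₂.getLast hq₂ne)) := by
      rw [List.getLast?_append, List.getLast?_map, List.getLast?_eq_getLast hq₂ne]; rfl
    have h0 : (net (x.series y)).head (Sum.inr (q₂.getLast hq₂ne)) = Sum.inr true :=
      hlast _ hml₂
    have h0' : seriesRight (y.hd (q₂.getLast hq₂ne)) = Sum.inr true := h0
    rw [Option.mem_def, List.getLast?_eq_getLast hq₂ne, Option.some_inj] at hc
    rw [← hc]
    exact seriesRight_eq_sink.1 h0'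
  · -- nodup of nodes q₂
    have hbase : (q₂.map (fun c => y.hd c)).Nodup := by
      have : (q₂.map fun c => (seriesRight (y.hd c) : (x.series y).Node)) =
          (q₂.map fun c => y.hd c).map seriesRight := by simp [List.map_map, Function.comp]
      rw [this] at hnd₂r
      exact hnd₂r.of_map _
    have hnotmem : (Sum.inr false : y.Node) ∉ q₂.map fun c => y.hd c := by
      simp only [List.mem_map, not_exists, not_and]
      intro c _ hcc
      exact hd_ne_source y c hcc
    have htl : y.tl b = Sum.inr false := hb2
    show ((net y).nodes q₂).Nodup
    have : (net y).nodes q₂ = Sum.inr false :: q₂.map fun c => y.hd c := by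
      simp only [Network.nodes, hq₂, net_tail, net_head]
      rw [htl]
      rfl
    rw [this]
    exact List.nodup_cons.2 ⟨hnotmem, hbase⟩

lemma mid_mem_nodes {p₁ : List x.Arcs} {p₂ : List y.Arcs}
    (hp₁ : (net x).IsSTPath p₁) (hp₂ : (net y).IsSTPath p₂) :
    mid x y ∈ (net (x.series y)).nodes (p₁.map Sum.inl ++ p₂.map Sum.inr) := by
  rw [nodes_series_append hp₁.1]
  refine List.mem_append_left _ ?_
  rw [← seriesLeft_sink]
  exact List.mem_map_of_mem (sink_mem_nodes hp₁)

lemma strictLeft_mem {p₁ : List x.Arcs} {p₂ : List y.Arcs}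
    (hp₁ : (net x).IsSTPath p₁) {v' : x.Node} (hv' : v' ≠ Sum.inr true)
    (hv : (seriesLeft v' : (x.series y).Node) ∈
      (net (x.series y)).nodes (p₁.map Sum.inl ++ p₂.map Sum.inr)) :
    v' ∈ (net x).nodes p₁ := by
  rw [nodes_series_append hp₁.1] at hv
  rcases List.mem_append.1 hv with h | h
  · obtain ⟨n, hn, he⟩ := List.mem_map.1 h
    rwa [← seriesLeft_inj he]
  · exfalso
    have : (p₂.map fun b => (seriesRight (y.hd b) : (x.series y).Node)) =
        (p₂.map fun b => y.hd b).map seriesRight := by simp [List.map_map, Function.comp]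
    rw [this] at h
    exact seriesLeft_not_mem_map_right hv' _ h

lemma strictRight_mem {p₁ : List x.Arcs} {p₂ : List y.Arcs}
    (hp₁ : (net x).IsSTPath p₁) (hp₂ : (net y).IsSTPath p₂)
    {v' : y.Node} (hv' : v' ≠ Sum.inr false)
    (hv : (seriesRight v' : (x.series y).Node) ∈
      (net (x.series y)).nodes (p₁.map Sum.inl ++ p₂.map Sum.inr)) :
    v' ∈ (net y).nodes p₂ := by
  rw [nodes_series_append' hp₁ hp₂] at hv
  rcases List.mem_append.1 hv with h | h
  · exfalso
    rw [← List.map_dropLast] at h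
    exact seriesRight_not_mem_map_left hv' _ h
  · obtain ⟨n, hn, he⟩ := List.mem_map.1 h
    rwa [← seriesRight_inj he]

end SPTerm

namespace SPTerm

variable {x y : SPTerm}

lemma eq_inr_of_mem_both {v : (x.parallel y).Node} {l₁ : List x.Node} {l₂ : List y.Node}
    (h1 : v ∈ l₁.map parallelLeft) (h2 : v ∈ l₂.map parallelRight) :
    ∃ b, v = Sum.inr b := by
  obtain ⟨a, -, rfl⟩ := List.mem_map.1 h1
  obtain ⟨b, -, hb⟩ := List.mem_map.1 h2
  obtain ⟨bb, hbb, -⟩ := parallelLeft_eq_parallelRight.1 hb.symm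
  exact ⟨bb, by rw [hbb]; rfl⟩

lemma core_easy₁ {V A : Type} {N : Network V A} {pstar p q : List A} {v w : V}
    (hvp : v ∈ N.nodes p) (hvq : v ∈ N.nodes q) (hvw : [v, w].Sublist (N.nodes pstar)) :
    ∃ ξ, (ξ = v ∨ [v, ξ].Sublist (N.nodes pstar)) ∧
      (ξ = w ∨ [ξ, w].Sublist (N.nodes pstar)) ∧
      ξ ∈ N.nodes pstar ∧ ξ ∈ N.nodes p ∧ ξ ∈ N.nodes q :=
  ⟨v, Or.inl rfl, Or.inr hvw, hvw.subset (by simp), hvp, hvq⟩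

lemma core_easy₂ {V A : Type} {N : Network V A} {pstar p q : List A} {v w : V}
    (hwp : w ∈ N.nodes p) (hwq : w ∈ N.nodes q) (hvw : [v, w].Sublist (N.nodes pstar)) :
    ∃ ξ, (ξ = v ∨ [v, ξ].Sublist (N.nodes pstar)) ∧
      (ξ = w ∨ [ξ, w].Sublist (N.nodes pstar)) ∧
      ξ ∈ N.nodes pstar ∧ ξ ∈ N.nodes p ∧ ξ ∈ N.nodes q :=
  ⟨w, Or.inr hvw, Or.inl rfl, hvw.subset (by simp), hwp, hwq⟩

lemma stmt10_core : ∀ (x : SPTerm) (pstar p q : List x.Arcs),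
    (net x).IsSTPath pstar → (net x).IsSTPath p → (net x).IsSTPath q →
    ∀ v w : x.Node, v ∈ (net x).nodes p → w ∈ (net x).nodes q →
    [v, w].Sublist ((net x).nodes pstar) →
    ∃ ξ, (ξ = v ∨ [v, ξ].Sublist ((net x).nodes pstar)) ∧
      (ξ = w ∨ [ξ, w].Sublist ((net x).nodes pstar)) ∧
      ξ ∈ (net x).nodes pstar ∧ ξ ∈ (net x).nodes p ∧ ξ ∈ (net x).nodes q := by
  intro x
  induction x with
  | edge =>
    intro pstar p q hps hp hq v w hvp hwq hvw
    have h1 : v ∈ [(Sum.inr false : SPTerm.edge.Node), Sum.inr true] := by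
      rw [← nodes_edge hp]; exact hvp
    exact core_easy₁ hvp (by rw [nodes_edge hq]; exact h1) hvw
  | parallel xl yr ihx ihy =>
    intro pstar p q hps hp hq v w hvp hwq hvw
    rcases parallel_decomp hps with ⟨π, rfl, hπ⟩ | ⟨π, rfl, hπ⟩
    · -- p* on the left
      rcases parallel_decomp hp with ⟨ρ, rfl, hρ⟩ | ⟨ρ, rfl, hρ⟩
      · rcases parallel_decomp hq with ⟨σ, rfl, hσ⟩ | ⟨σ, rfl, hσ⟩
        · -- all three on the left: use the induction hypothesis
          have hvp' : v ∈ ((net xl).nodes ρ).map parallelLeft := by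
            rw [← nodes_parallel_inl]; exact hvp
          have hwq' : w ∈ ((net xl).nodes σ).map parallelLeft := by
            rw [← nodes_parallel_inl]; exact hwq
          obtain ⟨v', hv'mem, rfl⟩ := List.mem_map.1 hvp'
          obtain ⟨w', hw'mem, rfl⟩ := List.mem_map.1 hwq'
          have hvw' : [v', w'].Sublist ((net xl).nodes π) := by
            apply aux_sublist_of_map_sublist parallelLeft_inj
            rw [nodes_parallel_inl] at hvw
            simpa using hvw
          obtain ⟨ξ', c1, c2, c3, c4, c5⟩ := ihx π ρ σ hπ hρ hσ v' w' hv'mem hw'mem hvw'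
          refine ⟨parallelLeft ξ', ?_, ?_, ?_, ?_, ?_⟩
          · rcases c1 with rfl | h
            · exact Or.inl rfl
            · refine Or.inr ?_
              rw [nodes_parallel_inl]
              simpa using h.map parallelLeft
          · rcases c2 with rfl | h
            · exact Or.inl rfl
            · refine Or.inr ?_
              rw [nodes_parallel_inl]
              simpa using h.map parallelLeft
          · rw [nodes_parallel_inl]; exact List.mem_map_of_mem c3
          · rw [nodes_parallel_inl]; exact List.mem_map_of_mem c4
          · rw [nodes_parallel_inl]; exact List.mem_map_of_mem c5
        · -- q on the right: w is a terminal
          have hwq' : w ∈ ((net yr).nodes σ).map parallelRight := by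
            rw [← nodes_parallel_inr]; exact hwq
          have hwps' : w ∈ ((net xl).nodes π).map parallelLeft := by
            rw [← nodes_parallel_inl]; exact hvw.subset (by simp)
          obtain ⟨bb, rfl⟩ := eq_inr_of_mem_both hwps' hwq'
          cases bb
          · exact absurd hvw fun hh =>
              aux_not_sublist_pair_head hps.2.2.2.2 (nodes_head? hps) hh
          · exact core_easy₂ (sink_mem_nodes hp) hwq hvw
      · -- p on the right: v is a terminal
        have hvp' : v ∈ ((net yr).nodes ρ).map parallelRight := by
          rw [← nodes_parallel_inr]; exact hvp
        have hvps' : v ∈ ((net xl).nodes π).map parallelLeft := by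
          rw [← nodes_parallel_inl]; exact hvw.subset (by simp)
        obtain ⟨bb, rfl⟩ := eq_inr_of_mem_both hvps' hvp'
        cases bb
        · exact core_easy₁ hvp (source_mem_nodes hq) hvw
        · exact absurd hvw fun hh =>
            aux_not_sublist_pair_getLast hps.2.2.2.2 (nodes_getLast? hps) hh
    · -- p* on the right
      rcases parallel_decomp hp with ⟨ρ, rfl, hρ⟩ | ⟨ρ, rfl, hρ⟩
      · -- p on the left: v is a terminal
        have hvp' : v ∈ ((net xl).nodes ρ).map parallelLeft := by
          rw [← nodes_parallel_inl]; exact hvp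
        have hvps' : v ∈ ((net yr).nodes π).map parallelRight := by
          rw [← nodes_parallel_inr]; exact hvw.subset (by simp)
        obtain ⟨bb, rfl⟩ := eq_inr_of_mem_both hvp' hvps'
        cases bb
        · exact core_easy₁ hvp (source_mem_nodes hq) hvw
        · exact absurd hvw fun hh =>
            aux_not_sublist_pair_getLast hps.2.2.2.2 (nodes_getLast? hps) hh
      · rcases parallel_decomp hq with ⟨σ, rfl, hσ⟩ | ⟨σ, rfl, hσ⟩
        · -- q on the left: w is a terminal
          have hwq' : w ∈ ((net xl).nodes σ).map parallelLeft := by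
            rw [← nodes_parallel_inl]; exact hwq
          have hwps' : w ∈ ((net yr).nodes π).map parallelRight := by
            rw [← nodes_parallel_inr]; exact hvw.subset (by simp)
          obtain ⟨bb, rfl⟩ := eq_inr_of_mem_both hwq' hwps'
          cases bb
          · exact absurd hvw fun hh =>
              aux_not_sublist_pair_head hps.2.2.2.2 (nodes_head? hps) hh
          · exact core_easy₂ (sink_mem_nodes hp) hwq hvw
        · -- all three on the right
          have hvp' : v ∈ ((net yr).nodes ρ).map parallelRight := by
            rw [← nodes_parallel_inr]; exact hvp
          have hwq' : w ∈ ((net yr).nodes σ).map parallelRight := by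
            rw [← nodes_parallel_inr]; exact hwq
          obtain ⟨v', hv'mem, rfl⟩ := List.mem_map.1 hvp'
          obtain ⟨w', hw'mem, rfl⟩ := List.mem_map.1 hwq'
          have hvw' : [v', w'].Sublist ((net yr).nodes π) := by
            apply aux_sublist_of_map_sublist parallelRight_inj
            rw [nodes_parallel_inr] at hvw
            simpa using hvw
          obtain ⟨ξ', c1, c2, c3, c4, c5⟩ := ihy π ρ σ hπ hρ hσ v' w' hv'mem hw'mem hvw'
          refine ⟨parallelRight ξ', ?_, ?_, ?_, ?_, ?_⟩
          · rcases c1 with rfl | h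
            · exact Or.inl rfl
            · refine Or.inr ?_
              rw [nodes_parallel_inr]
              simpa using h.map parallelRight
          · rcases c2 with rfl | h
            · exact Or.inl rfl
            · refine Or.inr ?_
              rw [nodes_parallel_inr]
              simpa using h.map parallelRight
          · rw [nodes_parallel_inr]; exact List.mem_map_of_mem c3
          · rw [nodes_parallel_inr]; exact List.mem_map_of_mem c4
          · rw [nodes_parallel_inr]; exact List.mem_map_of_mem c5
  | series xl yr ihx ihy =>
    intro pstar p q hps hp hq v w hvp hwq hvw
    obtain ⟨π₁, π₂, rfl, hπ₁, hπ₂⟩ := series_decomp hps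
    obtain ⟨ρ₁, ρ₂, rfl, hρ₁, hρ₂⟩ := series_decomp hp
    obtain ⟨σ₁, σ₂, rfl, hσ₁, hσ₂⟩ := series_decomp hq
    have hmapπ : (π₂.map fun b => (seriesRight (yr.hd b) : (xl.series yr).Node)) =
        (π₂.map fun b => yr.hd b).map seriesRight := by simp [List.map_map, Function.comp]
    rcases node_trichotomy v with rfl | ⟨v', rfl, hv'⟩ | ⟨v', rfl, hv'⟩
    · exact core_easy₁ hvp (mid_mem_nodes hσ₁ hσ₂) hvw
    · -- v strictly left
      rcases node_trichotomy w with rfl | ⟨w', rfl, hw'⟩ | ⟨w', rfl, hw'⟩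
      · exact core_easy₂ (mid_mem_nodes hρ₁ hρ₂) hwq hvw
      · -- both strictly left
        have hv'mem : v' ∈ (net xl).nodes ρ₁ := strictLeft_mem hρ₁ hv' hvp
        have hw'mem : w' ∈ (net xl).nodes σ₁ := strictLeft_mem hσ₁ hw' hwq
        have hsub : [v', w'].Sublist ((net xl).nodes π₁) := by
          apply aux_sublist_of_map_sublist seriesLeft_inj
          have h1 : [(seriesLeft v' : (xl.series yr).Node), seriesLeft w'].Sublist
              (((net xl).nodes π₁).map seriesLeft) := by
            refine aux_sublist_left_of_forall_not_mem
              (l₂ := π₂.map fun b => seriesRight (yr.hd b)) ?_ ?_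
            · rw [← nodes_series_append hπ₁.1]; exact hvw
            · intro n hn
              rw [hmapπ]
              rcases List.mem_cons.1 hn with rfl | hn
              · exact seriesLeft_not_mem_map_right hv' _
              · rcases List.mem_cons.1 hn with rfl | hn
                · exact seriesLeft_not_mem_map_right hw' _
                · simp at hn
          simpa using h1
        obtain ⟨ξ', c1, c2, c3, c4, c5⟩ := ihx π₁ ρ₁ σ₁ hπ₁ hρ₁ hσ₁ v' w' hv'mem hw'mem hsub
        refine ⟨seriesLeft ξ', ?_, ?_, ?_, ?_, ?_⟩
        · rcases c1 with rfl | h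
          · exact Or.inl rfl
          · refine Or.inr ?_
            rw [nodes_series_append hπ₁.1]
            exact List.sublist_append_of_sublist_left (by simpa using h.map seriesLeft)
        · rcases c2 with rfl | h
          · exact Or.inl rfl
          · refine Or.inr ?_
            rw [nodes_series_append hπ₁.1]
            exact List.sublist_append_of_sublist_left (by simpa using h.map seriesLeft)
        · rw [nodes_series_append hπ₁.1]
          exact List.mem_append_left _ (List.mem_map_of_mem c3)
        · rw [nodes_series_append hρ₁.1]
          exact List.mem_append_left _ (List.mem_map_of_mem c4)
        · rw [nodes_series_append hσ₁.1]
          exact List.mem_append_left _ (List.mem_map_of_mem c5)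
      · -- v strictly left, w strictly right : take ξ = mid
        have hv'π : v' ∈ (net xl).nodes π₁ :=
          strictLeft_mem hπ₁ hv' (hvw.subset (by simp))
        have hw'π : w' ∈ (net yr).nodes π₂ :=
          strictRight_mem hπ₁ hπ₂ hw' (hvw.subset (by simp))
        refine ⟨mid xl yr, Or.inr ?_, Or.inr ?_, mid_mem_nodes hπ₁ hπ₂,
          mid_mem_nodes hρ₁ hρ₂, mid_mem_nodes hσ₁ hσ₂⟩
        · rw [nodes_series_append hπ₁.1]
          refine List.sublist_append_of_sublist_left ?_
          have h1 : [v', Sum.inr true].Sublist ((net xl).nodes π₁) :=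
            aux_sublist_pair_of_mem_getLast hv'π (nodes_getLast? hπ₁) hv'
          simpa using h1.map seriesLeft
        · rw [nodes_series_append' hπ₁ hπ₂]
          refine List.sublist_append_of_sublist_right ?_
          have h1 : [Sum.inr false, w'].Sublist ((net yr).nodes π₂) :=
            aux_sublist_pair_of_mem_head hw'π (nodes_head? hπ₂) hw'
          simpa using h1.map seriesRight
    · -- v strictly right
      rcases node_trichotomy w with rfl | ⟨w', rfl, hw'⟩ | ⟨w', rfl, hw'⟩
      · exact core_easy₂ (mid_mem_nodes hρ₁ hρ₂) hwq hvw
      · -- v strictly right, w strictly left : impossible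
        exfalso
        rw [nodes_series_append hπ₁.1, List.sublist_append_iff] at hvw
        obtain ⟨m₁, m₂, hm, hs₁, hs₂⟩ := hvw
        have hvnot : (seriesRight v' : (xl.series yr).Node) ∉
            ((net xl).nodes π₁).map seriesLeft := seriesRight_not_mem_map_left hv' _
        have hwnot : (seriesLeft w' : (xl.series yr).Node) ∉
            π₂.map fun b => seriesRight (yr.hd b) := by
          rw [hmapπ]
          exact seriesLeft_not_mem_map_right hw' _
        cases m₁ with
        | nil =>
          rw [List.nil_append] at hm
          exact hwnot (hs₂.subset (by rw [← hm]; simp))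
        | cons c t =>
          rw [List.cons_append, List.cons.injEq] at hm
          obtain ⟨hc, -⟩ := hm
          exact hvnot (hs₁.subset (by rw [hc]; exact List.mem_cons_self))
      · -- both strictly right
        have hv'mem : v' ∈ (net yr).nodes ρ₂ := strictRight_mem hρ₁ hρ₂ hv' hvp
        have hw'mem : w' ∈ (net yr).nodes σ₂ := strictRight_mem hσ₁ hσ₂ hw' hwq
        have hsub : [v', w'].Sublist ((net yr).nodes π₂) := by
          apply aux_sublist_of_map_sublist seriesRight_inj
          have h1 : [(seriesRight v' : (xl.series yr).Node), seriesRight w'].Sublist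
              (((net yr).nodes π₂).map seriesRight) := by
            refine aux_sublist_right_of_forall_not_mem
              (l₁ := (((net xl).nodes π₁).map seriesLeft).dropLast) ?_ ?_
            · rw [← nodes_series_append' hπ₁ hπ₂]; exact hvw
            · intro n hn
              rw [← List.map_dropLast]
              rcases List.mem_cons.1 hn with rfl | hn
              · exact seriesRight_not_mem_map_left hv' _
              · rcases List.mem_cons.1 hn with rfl | hn
                · exact seriesRight_not_mem_map_left hw' _
                · simp at hn
          simpa using h1
        obtain ⟨ξ', c1, c2, c3, c4, c5⟩ := ihy π₂ ρ₂ σ₂ hπ₂ hρ₂ hσ₂ v' w' hv'mem hw'mem hsub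
        refine ⟨seriesRight ξ', ?_, ?_, ?_, ?_, ?_⟩
        · rcases c1 with rfl | h
          · exact Or.inl rfl
          · refine Or.inr ?_
            rw [nodes_series_append' hπ₁ hπ₂]
            exact List.sublist_append_of_sublist_right (by simpa using h.map seriesRight)
        · rcases c2 with rfl | h
          · exact Or.inl rfl
          · refine Or.inr ?_
            rw [nodes_series_append' hπ₁ hπ₂]
            exact List.sublist_append_of_sublist_right (by simpa using h.map seriesRight)
        · rw [nodes_series_append' hπ₁ hπ₂]
          exact List.mem_append_right _ (List.mem_map_of_mem c3)
        · rw [nodes_series_append' hρ₁ hρ₂]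
          exact List.mem_append_right _ (List.mem_map_of_mem c4)
        · rw [nodes_series_append' hσ₁ hσ₂]
          exact List.mem_append_right _ (List.mem_map_of_mem c5)

end SPTerm
/-- Lemma 4.13: in a two-terminal series-parallel graph, if `p` meets
a path `p*` at node `v` and `q` meets `p*` at node `w`, where `v` precedes `w` on
`p*`, then `p` and `q` have a common node `ξ` lying on the subpath of `p*` between
`v` and `w`. -/
theorem stmt10 {V A : Type} [DecidableEq V] [DecidableEq A]
    (N : Network V A) (hsp : N.IsSeriesParallel)
    (pstar p q : List A)
    (hps : N.IsSTPath pstar) (hp : N.IsSTPath p) (hq : N.IsSTPath q)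
    (v w : V) (hvp : v ∈ N.nodes p) (hwq : w ∈ N.nodes q)
    (hvw : [v, w].Sublist (N.nodes pstar)) :
    ∃ ξ : V,
      (ξ = v ∨ [v, ξ].Sublist (N.nodes pstar)) ∧
      (ξ = w ∨ [ξ, w].Sublist (N.nodes pstar)) ∧
      ξ ∈ N.nodes pstar ∧ ξ ∈ N.nodes p ∧ ξ ∈ N.nodes q := by
  obtain ⟨x, eV, eA, ht, hh, hs, hT⟩ := hsp
  have ht' : ∀ a, (SPTerm.net x).tail (eA a) = eV (N.tail a) := fun a => (ht a).symm
  have hh' : ∀ a, (SPTerm.net x).head (eA a) = eV (N.head a) := fun a => (hh a).symm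
  have hnm : ∀ r : List A, (SPTerm.net x).nodes (r.map eA) = (N.nodes r).map eV :=
    aux_nodes_map N (SPTerm.net x) eV eA ht' hh'
  have hmap : ∀ r, N.IsSTPath r → (SPTerm.net x).IsSTPath (r.map eA) := fun r hr =>
    (aux_isSTPath_map_iff eV.injective ht' hh' hs hT).2 hr
  obtain ⟨ξ', c1, c2, c3, c4, c5⟩ := SPTerm.stmt10_core x (pstar.map eA) (p.map eA) (q.map eA)
    (hmap _ hps) (hmap _ hp) (hmap _ hq) (eV v) (eV w)
    (by rw [hnm]; exact List.mem_map_of_mem hvp)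
    (by rw [hnm]; exact List.mem_map_of_mem hwq)
    (by rw [hnm]; simpa using hvw.map eV)
  rw [hnm] at c1 c2 c3 c4 c5
  obtain ⟨ξ, hξmem, rfl⟩ := List.mem_map.1 c3
  have hpb : ∀ {a : V} {r : List A}, eV a ∈ (N.nodes r).map eV → a ∈ N.nodes r := by
    intro a r h
    obtain ⟨a₀, ha₀, he⟩ := List.mem_map.1 h
    rwa [← eV.injective he]
  refine ⟨ξ, ?_, ?_, hξmem, hpb c4, hpb c5⟩
  · rcases c1 with h | h
    · exact Or.inl (eV.injective h)
    · exact Or.inr (aux_sublist_of_map_sublist eV.injective (by simpa using h))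
  · rcases c2 with h | h
    · exact Or.inl (eV.injective h)
    · exact Or.inr (aux_sublist_of_map_sublist eV.injective (by simpa using h))
end

section
/- Let N be a network over time and T ∈ ℕ a time horizon such that every s-t path p in N has transit time τ(p) ≤ T/2 (long time horizon). Then every temporally repeated flow f with time horizon T associated with a static flow x has peak cost c^max(f) = Σ_{a ∈ A} c_a · τ_a · x(a), and this peak cost is attained at the time point ⌊T/2⌋, i.e., c(f, ⌊T/2⌋) = c^max(f). -/
open MeasureTheory

open Network


section Stmt13Helpers

variable {V A : Type} [DecidableEq A]

private lemma stmt13_mem_dropWhile_self (a : A) :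
    ∀ p : List A, a ∈ p → a ∈ p.dropWhile (fun b => b ≠ a)
  | b :: t, h => by
    by_cases hb : b = a
    · subst hb; simp [List.dropWhile]
    · rw [List.dropWhile_cons]
      simp only [ne_eq, hb, not_false_iff, decide_not]
      have : a ∈ t := by
        rcases List.mem_cons.mp h with h' | h'
        · exact absurd h'.symm hb
        · exact h'
      simpa using stmt13_mem_dropWhile_self a t this

private lemma stmt13_prefix_add_suffix (N : Network V A) (p : List A) (a : A) :
    N.prefixTime p a + N.suffixTime p a = N.pathTime p := by
  unfold Network.prefixTime Network.suffixTime Network.pathTime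
  rw [← List.sum_append, ← List.map_append, List.takeWhile_append_dropWhile]

private lemma stmt13_tau_le_suffix (N : Network V A) {p : List A} {a : A} (h : a ∈ p) :
    N.τ a ≤ N.suffixTime p a :=
  List.le_sum_of_mem (List.mem_map_of_mem (f := N.τ) (stmt13_mem_dropWhile_self a p h))

private lemma stmt13_indicator_intervalIntegrable (c d l r k : ℝ) :
    IntervalIntegrable (Set.indicator (Set.Ico c d) (fun _ => k)) volume l r :=
  ⟨(intervalIntegrable_const (c := k) (μ := volume) (a := l) (b := r)).1.indicator
      measurableSet_Ico,
   (intervalIntegrable_const (c := k) (μ := volume) (a := l) (b := r)).2.indicator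
      measurableSet_Ico⟩

private lemma stmt13_integral_indicator_Ico (c d l r k : ℝ) (hlr : l ≤ r) :
    ∫ ξ in l..r, Set.indicator (Set.Ico c d) (fun _ => k) ξ =
      k * (volume (Set.Ico c d ∩ Set.Ioc l r)).toReal := by
  rw [intervalIntegral.integral_of_le hlr, MeasureTheory.integral_indicator measurableSet_Ico,
    Measure.restrict_restrict measurableSet_Ico, MeasureTheory.setIntegral_const, smul_eq_mul,
    mul_comm]
  rfl

end Stmt13Helpers

/-- Lemma 5.1: if the time horizon `T` is long, i.e. every `s`-`t`
path has transit time at most `T/2`, then every temporally repeated flow with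
horizon `T` induced by a decomposition `y` of a static flow `x` has peak cost
`Σ_a c_a·τ_a·x(a)`, attained at the time point `⌊T/2⌋`. -/
theorem stmt13 {V A : Type} [DecidableEq V] [DecidableEq A] [Fintype A]
    (N : Network V A) (T : ℕ)
    (hlong : ∀ p, N.IsSTPath p → (N.pathTime p : ℝ) ≤ (T : ℝ) / 2)
    (y : List A → ℝ) (hy : N.IsDecomposition y) :
    N.trPeakCost y (T : ℝ) =
      (∑ a : A, (N.c a : ℝ) * (N.τ a : ℝ) * N.staticOf y a) ∧
    N.costAt (N.trRate y (T : ℝ)) ((T / 2 : ℕ) : ℝ) = N.trPeakCost y (T : ℝ) := by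
  classical
  obtain ⟨hy0, hyP, hyfin, hycap⟩ := hy
  set F : A → Finset (List A) := fun a => hyfin.toFinset.filter (fun p => a ∈ p) with hF
  have hmemF : ∀ a : A, ∀ p ∈ F a, y p ≠ 0 ∧ a ∈ p ∧ N.IsSTPath p ∧
      2 * N.pathTime p ≤ T := by
    intro a p hp
    rw [hF] at hp
    simp only [Finset.mem_filter, Set.Finite.mem_toFinset, Function.mem_support] at hp
    obtain ⟨hp1, hp2⟩ := hp
    have hst := hyP p hp1
    have h2 : (2 * N.pathTime p : ℝ) ≤ (T : ℝ) := by
      have := hlong p hst; push_cast; linarith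
    exact ⟨hp1, hp2, hst, by exact_mod_cast h2⟩
  have hstat : ∀ a : A, N.staticOf y a = ∑ p ∈ F a, y p := by
    intro a
    rw [Network.staticOf, finsum_mem_eq_sum_filter y _ hyfin, hF]
    apply Finset.sum_congr
    · ext p; simp [Set.mem_setOf_eq]
    · intros; rfl
  have hrate : ∀ (a : A) (θ : ℝ), N.trRate y (T : ℝ) a θ =
      ∑ p ∈ F a, Set.indicator
        (Set.Ico ((N.prefixTime p a : ℝ)) ((T : ℝ) - (N.suffixTime p a : ℝ)))
        (fun _ => y p) θ := by
    intro a θ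
    rw [Network.trRate, finsum_mem_eq_sum_filter y _ hyfin, hF, Finset.sum_filter,
      Finset.sum_filter]
    apply Finset.sum_congr rfl
    intro p hp
    simp only [Set.Finite.mem_toFinset, Function.mem_support] at hp
    have hst := hyP p hp
    have hle : (N.pathTime p : ℝ) ≤ (T : ℝ) := by
      have h1 := hlong p hst
      have h2 : (0 : ℝ) ≤ (T : ℝ) := Nat.cast_nonneg _
      linarith
    by_cases ha : a ∈ p
    · simp only [Set.mem_setOf_eq]
      by_cases hc : (N.prefixTime p a : ℝ) ≤ θ ∧ (N.suffixTime p a : ℝ) < (T : ℝ) - θ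
      · rw [if_pos ⟨hst, hle, ha, hc.1, hc.2⟩, if_pos ha,
          Set.indicator_of_mem (Set.mem_Ico.mpr ⟨hc.1, by linarith [hc.2]⟩)]
      · rw [if_neg (fun hmem => hc ⟨hmem.2.2.2.1, hmem.2.2.2.2⟩), if_pos ha,
          Set.indicator_of_notMem (fun hmem => hc ⟨(Set.mem_Ico.mp hmem).1, by
            have := (Set.mem_Ico.mp hmem).2; linarith⟩)]
    · rw [if_neg (fun hmem => ha hmem.2.2.1), if_neg ha]
  have hintegral : ∀ (a : A) (θ : ℝ),
      (∫ ξ in (θ - (N.τ a : ℝ))..θ, N.trRate y (T : ℝ) a ξ) =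
      ∑ p ∈ F a, y p * (volume (Set.Ico ((N.prefixTime p a : ℝ))
        ((T : ℝ) - (N.suffixTime p a : ℝ)) ∩ Set.Ioc (θ - (N.τ a : ℝ)) θ)).toReal := by
    intro a θ
    have hlr : θ - (N.τ a : ℝ) ≤ θ := sub_le_self _ (Nat.cast_nonneg _)
    rw [intervalIntegral.integral_congr (g := fun ξ => ∑ p ∈ F a, Set.indicator
        (Set.Ico ((N.prefixTime p a : ℝ)) ((T : ℝ) - (N.suffixTime p a : ℝ)))
        (fun _ => y p) ξ) (fun ξ _ => hrate a ξ)]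
    rw [intervalIntegral.integral_finset_sum
      (fun p _ => stmt13_indicator_intervalIntegrable _ _ _ _ _)]
    exact Finset.sum_congr rfl fun p _ => stmt13_integral_indicator_Ico _ _ _ _ _ hlr
  set M : ℝ := ∑ a : A, (N.c a : ℝ) * (N.τ a : ℝ) * N.staticOf y a with hM
  have hub : ∀ θ : ℝ, N.costAt (N.trRate y (T : ℝ)) θ ≤ M := by
    intro θ
    rw [Network.costAt, hM]
    apply Finset.sum_le_sum
    intro a _
    rw [hintegral a θ, hstat a, mul_assoc]
    apply mul_le_mul_of_nonneg_left _ (Nat.cast_nonneg _)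
    rw [Finset.mul_sum]
    apply Finset.sum_le_sum
    intro p hp
    have hvol : (volume (Set.Ico ((N.prefixTime p a : ℝ))
        ((T : ℝ) - (N.suffixTime p a : ℝ)) ∩ Set.Ioc (θ - (N.τ a : ℝ)) θ)).toReal
        ≤ (N.τ a : ℝ) := by
      have h1 : volume (Set.Ico ((N.prefixTime p a : ℝ))
          ((T : ℝ) - (N.suffixTime p a : ℝ)) ∩ Set.Ioc (θ - (N.τ a : ℝ)) θ)
          ≤ ENNReal.ofReal ((N.τ a : ℝ)) := by
        calc volume (Set.Ico ((N.prefixTime p a : ℝ))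
              ((T : ℝ) - (N.suffixTime p a : ℝ)) ∩ Set.Ioc (θ - (N.τ a : ℝ)) θ)
            ≤ volume (Set.Ioc (θ - (N.τ a : ℝ)) θ) :=
              measure_mono Set.inter_subset_right
          _ = ENNReal.ofReal ((N.τ a : ℝ)) := by rw [Real.volume_Ioc]; ring_nf
      calc (volume (Set.Ico ((N.prefixTime p a : ℝ))
              ((T : ℝ) - (N.suffixTime p a : ℝ)) ∩ Set.Ioc (θ - (N.τ a : ℝ)) θ)).toReal
          ≤ (ENNReal.ofReal ((N.τ a : ℝ))).toReal :=
            ENNReal.toReal_mono ENNReal.ofReal_ne_top h1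
        _ = (N.τ a : ℝ) := ENNReal.toReal_ofReal (Nat.cast_nonneg _)
    calc y p * (volume (Set.Ico ((N.prefixTime p a : ℝ))
            ((T : ℝ) - (N.suffixTime p a : ℝ)) ∩ Set.Ioc (θ - (N.τ a : ℝ)) θ)).toReal
        ≤ y p * (N.τ a : ℝ) := mul_le_mul_of_nonneg_left hvol (hy0 p)
      _ = (N.τ a : ℝ) * y p := mul_comm _ _
  set θ₀ : ℝ := ((T / 2 : ℕ) : ℝ) with hθ₀
  have hattain : N.costAt (N.trRate y (T : ℝ)) θ₀ = M := by
    rw [Network.costAt, hM]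
    apply Finset.sum_congr rfl
    intro a _
    rw [hintegral a θ₀, hstat a, mul_assoc]
    congr 1
    rw [Finset.mul_sum]
    apply Finset.sum_congr rfl
    intro p hp
    obtain ⟨hy0p, hap, hst, h2T⟩ := hmemF a p hp
    have hps := stmt13_prefix_add_suffix N p a
    have hts := stmt13_tau_le_suffix N hap
    have hpre : (N.prefixTime p a : ℝ) ≤ θ₀ - (N.τ a : ℝ) := by
      have h : N.prefixTime p a + N.τ a ≤ T / 2 := by omega
      rw [hθ₀]
      have h2 := (Nat.cast_le (α := ℝ)).mpr h
      push_cast at h2 ⊢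
      linarith
    have hsuf : θ₀ ≤ (T : ℝ) - (N.suffixTime p a : ℝ) := by
      have h : T / 2 + N.suffixTime p a ≤ T := by omega
      rw [hθ₀]
      have h2 := (Nat.cast_le (α := ℝ)).mpr h
      push_cast at h2 ⊢
      linarith
    have hvol : volume (Set.Ico ((N.prefixTime p a : ℝ))
        ((T : ℝ) - (N.suffixTime p a : ℝ)) ∩ Set.Ioc (θ₀ - (N.τ a : ℝ)) θ₀)
        = ENNReal.ofReal ((N.τ a : ℝ)) := by
      apply le_antisymm
      · calc volume (Set.Ico ((N.prefixTime p a : ℝ))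
              ((T : ℝ) - (N.suffixTime p a : ℝ)) ∩ Set.Ioc (θ₀ - (N.τ a : ℝ)) θ₀)
            ≤ volume (Set.Ioc (θ₀ - (N.τ a : ℝ)) θ₀) :=
              measure_mono Set.inter_subset_right
          _ = ENNReal.ofReal ((N.τ a : ℝ)) := by rw [Real.volume_Ioc]; ring_nf
      · calc ENNReal.ofReal ((N.τ a : ℝ))
              = volume (Set.Ioo (θ₀ - (N.τ a : ℝ)) θ₀) := by rw [Real.volume_Ioo]; ring_nf
          _ ≤ volume (Set.Ico ((N.prefixTime p a : ℝ))
              ((T : ℝ) - (N.suffixTime p a : ℝ)) ∩ Set.Ioc (θ₀ - (N.τ a : ℝ)) θ₀) :=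
              measure_mono (fun x hx =>
              ⟨⟨le_of_lt (lt_of_le_of_lt hpre hx.1), lt_of_lt_of_le hx.2 hsuf⟩,
               ⟨hx.1, le_of_lt hx.2⟩⟩)
    rw [hvol, ENNReal.toReal_ofReal (Nat.cast_nonneg _), mul_comm]
  have hpeak : N.trPeakCost y (T : ℝ) = M := by
    rw [Network.trPeakCost, Network.peakCost]
    rcases Nat.eq_zero_or_pos T with hT0 | hTpos
    · rw [hT0]
      simp only [Nat.cast_zero, Set.Ico_self, Set.image_empty, Real.sSup_empty]
      symm
      rw [hM]
      apply Finset.sum_eq_zero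
      intro a _
      rw [hstat a, mul_assoc, Finset.mul_sum]
      have hz : ∀ p ∈ F a, (N.τ a : ℝ) * y p = 0 := by
        intro p hp
        obtain ⟨-, hap, -, h2T⟩ := hmemF a p hp
        have hts := stmt13_tau_le_suffix N hap
        have hps := stmt13_prefix_add_suffix N p a
        have hτ : N.τ a = 0 := by omega
        simp [hτ]
      rw [Finset.sum_eq_zero hz, mul_zero]
    · have hθ₀mem : θ₀ ∈ Set.Ico (0 : ℝ) (T : ℝ) := by
        constructor
        · rw [hθ₀]; exact Nat.cast_nonneg _
        · rw [hθ₀]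
          exact_mod_cast Nat.div_lt_self hTpos one_lt_two
      apply le_antisymm
      · apply csSup_le ⟨_, Set.mem_image_of_mem _ hθ₀mem⟩
        rintro z ⟨θ, -, rfl⟩
        exact hub θ
      · rw [← hattain]
        exact le_csSup ⟨M, by rintro z ⟨θ, -, rfl⟩; exact hub θ⟩
          (Set.mem_image_of_mem _ hθ₀mem)
  exact ⟨hpeak, by rw [hpeak]; exact hattain⟩
end

section
/- Let φ be a 3-SAT instance with variables X_1, …, X_n and clauses C_1, …, C_m, each clause containing exactly three pairwise different literals. Construct the network with nodes {s, t} ∪ {v_i : i ∈ [n]} ∪ {w_i^j, w̄_i^j : i ∈ [n], 0 ≤ j ≤ m} and arcs {(s, w_i^0), (s, w̄_i^0), (w_i^m, v_i), (w̄_i^m, v_i), (v_i, t) : i ∈ [n]} ∪ {(w_i^{j−1}, w_i^j), (w̄_i^{j−1}, w̄_i^j) : i ∈ [n], j ∈ [m]}; all capacities and transit times equal 1; the arc (w_i^{j−1}, w_i^j) has cost 1 if the literal ¬X_i occurs in C_j, the arc (w̄_i^{j−1}, w̄_i^j) has cost 1 if the literal X_i occurs in C_j, and all other arcs have cost 0;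 set the time horizon T = m + 4. Then there exists an integral temporally repeated flow with time horizon T of value at least n and peak cost at most 2 if and only if φ is satisfiable. Consequently, deciding whether a given instance admits an integral temporally repeated flow with peak cost at most a given bound is NP-hard, even on two-terminal series-parallel graphs with unit transit times, unit capacities, and arc costs in {0,1}. -/
open MeasureTheory

open Network

/-- Node type for the 3-SAT network: `Sum.inl 0 = s`, `Sum.inl 1 = t`,
`Sum.inr (Sum.inl i) = vᵢ`, and `Sum.inr (Sum.inr (i, b, j))` is the node `wᵢʲ`
(for `b = true`) resp. `w̄ᵢʲ` (for `b = false`), `0 ≤ j ≤ m`. -/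
abbrev V₁₇ (n : ℕ) : Type := Fin 2 ⊕ (Fin n ⊕ Fin n × Bool × ℕ)

/-- Arc type for the 3-SAT network: `Sum.inr i` is the arc `(vᵢ, t)`;
`Sum.inl (i, b, j)` is, for `j = 0`, the arc from `s` into the chain of variable `i`
and sign `b`, for `1 ≤ j ≤ m` the `j`-th chain arc `(wᵢʲ⁻¹, wᵢʲ)`, and for
`j = m + 1` the arc `(wᵢᵐ, vᵢ)`. -/
abbrev A₁₇ (n m : ℕ) : Type := (Fin n × Bool × Fin (m + 2)) ⊕ Fin n

/-- The network of Theorem 3.1, built from a 3-SAT instance with `n` variables and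
`m` clauses `C : Fin m → Fin 3 → Fin n × Bool` (a literal is a pair (variable, sign)).
All capacities and transit times are `1`; the arc `(wᵢʲ⁻¹, wᵢʲ)` of the positive
chain has cost `1` iff `¬Xᵢ ∈ C_j`, the corresponding arc of the negative chain has
cost `1` iff `Xᵢ ∈ C_j`, and all other arcs have cost `0`. -/
def N₁₇ (n m : ℕ) (C : Fin m → Fin 3 → Fin n × Bool) :
    Network (V₁₇ n) (A₁₇ n m) where
  tail := fun e => match e with
    | Sum.inl (i, b, j) =>
        if (j : ℕ) = 0 then Sum.inl 0 else Sum.inr (Sum.inr (i, b, (j : ℕ) - 1))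
    | Sum.inr i => Sum.inr (Sum.inl i)
  head := fun e => match e with
    | Sum.inl (i, b, j) =>
        if (j : ℕ) = m + 1 then Sum.inr (Sum.inl i) else Sum.inr (Sum.inr (i, b, (j : ℕ)))
    | Sum.inr _ => Sum.inl 1
  u := fun _ => 1
  τ := fun _ => 1
  c := fun e => match e with
    | Sum.inl (i, b, j) =>
        if h : 1 ≤ (j : ℕ) ∧ (j : ℕ) ≤ m then
          (if ∃ r : Fin 3, C ⟨(j : ℕ) - 1, by omega⟩ r = (i, !b) then 1 else 0)
        else 0
    | Sum.inr _ => 0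
  s := Sum.inl 0
  t := Sum.inl 1


section ListAux

lemma takeWhile_ne_middle {α : Type*} [DecidableEq α] (a : α) :
    ∀ (l₁ l₂ : List α), a ∉ l₁ →
      ((l₁ ++ a :: l₂).takeWhile (fun b => b ≠ a)) = l₁
  | [], l₂, _ => by simp
  | x :: l₁, l₂, h => by
    have hx : x ≠ a := fun he => h (by simp [he])
    have h1 : a ∉ l₁ := fun he => h (by simp [he])
    simpa [List.takeWhile_cons, hx] using takeWhile_ne_middle a l₁ l₂ h1

lemma dropWhile_ne_middle {α : Type*} [DecidableEq α] (a : α) :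
    ∀ (l₁ l₂ : List α), a ∉ l₁ →
      ((l₁ ++ a :: l₂).dropWhile (fun b => b ≠ a)) = a :: l₂
  | [], l₂, _ => by simp
  | x :: l₁, l₂, h => by
    have hx : x ≠ a := fun he => h (by simp [he])
    have h1 : a ∉ l₁ := fun he => h (by simp [he])
    simpa [List.dropWhile_cons, hx] using dropWhile_ne_middle a l₁ l₂ h1

lemma finsum_mem_of_inj {ι β : Type*} [Fintype ι] [DecidableEq β] (Q : ι → β)
    (hQ : Function.Injective Q) (F : β → ℝ) (hF : Function.support F ⊆ Set.range Q)
    (S : Set β) :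
    ∑ᶠ p ∈ S, F p = ∑ i, S.indicator F (Q i) := by
  classical
  rw [finsum_mem_def, finsum_eq_sum_of_support_subset _
    (s := Finset.univ.image Q) ?_]
  · rw [Finset.sum_image (fun a _ b _ h => hQ h)]
  · intro p hp
    have hp' : p ∈ Function.support F := by
      intro h0
      apply hp
      simp [Set.indicator_apply, h0]
    obtain ⟨i, rfl⟩ := hF hp'
    simp

end ListAux

namespace Stmt17

open List

variable {n m : ℕ} {C : Fin m → Fin 3 → Fin n × Bool}

@[simp] lemma N_tail_inl (i : Fin n) (b : Bool) (j : Fin (m + 2)) :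
    (N₁₇ n m C).tail (Sum.inl (i, b, j)) =
      if (j : ℕ) = 0 then Sum.inl 0 else Sum.inr (Sum.inr (i, b, (j : ℕ) - 1)) := rfl

@[simp] lemma N_tail_inr (i : Fin n) :
    (N₁₇ n m C).tail (Sum.inr i) = Sum.inr (Sum.inl i) := rfl

@[simp] lemma N_head_inl (i : Fin n) (b : Bool) (j : Fin (m + 2)) :
    (N₁₇ n m C).head (Sum.inl (i, b, j)) =
      if (j : ℕ) = m + 1 then Sum.inr (Sum.inl i) else Sum.inr (Sum.inr (i, b, (j : ℕ))) := rfl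

@[simp] lemma N_head_inr (i : Fin n) :
    (N₁₇ n m C).head ((Sum.inr i : A₁₇ n m)) = Sum.inl 1 := rfl

@[simp] lemma N_u (a : A₁₇ n m) : (N₁₇ n m C).u a = 1 := rfl
@[simp] lemma N_tau (a : A₁₇ n m) : (N₁₇ n m C).τ a = 1 := rfl
@[simp] lemma N_s : (N₁₇ n m C).s = Sum.inl 0 := rfl
@[simp] lemma N_t : (N₁₇ n m C).t = Sum.inl 1 := rfl
@[simp] lemma N_c_inr (i : Fin n) : (N₁₇ n m C).c (Sum.inr i) = 0 := rfl

lemma getElem_finRange' (N k : ℕ) (h : k < (List.finRange N).length) :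
    (List.finRange N)[k] = ⟨k, by simpa using h⟩ := by
  simp

/-- The chain path of variable `i` and sign `b`. -/
def QP (m : ℕ) (i : Fin n) (b : Bool) : List (A₁₇ n m) :=
  ((List.finRange (m + 2)).map fun j => Sum.inl (i, b, j)) ++ [Sum.inr i]

lemma mem_QP_inl {i' : Fin n} {b' : Bool} {j : Fin (m + 2)} {i : Fin n} {b : Bool} :
    (Sum.inl (i', b', j) : A₁₇ n m) ∈ QP m i b ↔ i' = i ∧ b' = b := by
  constructor
  · intro h
    simp only [QP, List.mem_append, List.mem_map, List.mem_finRange] at h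
    rcases h with ⟨j', hj⟩ | h
    · rcases hj with ⟨-, hj⟩
      injection hj with hj; injection hj with h1 h2; injection h2 with h3 h4
      exact ⟨h1.symm, h3.symm⟩
    · simp at h
  · rintro ⟨rfl, rfl⟩
    simp [QP]

lemma mem_QP_inr {i' i : Fin n} {b : Bool} :
    (Sum.inr i' : A₁₇ n m) ∈ QP m i b ↔ i' = i := by
  simp [QP]

lemma QP_injective : Function.Injective (fun ib : Fin n × Bool => QP m ib.1 ib.2) := by
  rintro ⟨i, b⟩ ⟨i', b'⟩ h
  simp only at h
  have h1 : (Sum.inr i : A₁₇ n m) ∈ QP m i' b' := by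
    rw [← h]; exact mem_QP_inr.2 rfl
  have h2 : (Sum.inl (i, b, 0) : A₁₇ n m) ∈ QP m i' b' := by
    rw [← h]; exact mem_QP_inl.2 ⟨rfl, rfl⟩
  obtain rfl := mem_QP_inr.1 h1
  obtain ⟨-, rfl⟩ := mem_QP_inl.1 h2
  rfl

lemma length_QP (i : Fin n) (b : Bool) : (QP m i b).length = m + 3 := by
  simp [QP]

lemma QP_ne_nil (i : Fin n) (b : Bool) : QP m i b ≠ [] := by
  simp [QP]

lemma tau_sum (l : List (A₁₇ n m)) : ((l.map (N₁₇ n m C).τ)).sum = l.length := by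
  induction l with
  | nil => simp
  | cons a l ih => simp [ih]; omega

lemma pathTime_QP (i : Fin n) (b : Bool) : (N₁₇ n m C).pathTime (QP m i b) = m + 3 := by
  rw [Network.pathTime, tau_sum, length_QP]

/-- Splitting of `QP` at the chain arc `j`. -/
lemma QP_split (i : Fin n) (b : Bool) (j : Fin (m + 2)) :
    QP m i b = ((List.finRange (m + 2)).take (j : ℕ)).map
        (fun j' => (Sum.inl (i, b, j') : A₁₇ n m)) ++
      (Sum.inl (i, b, j) : A₁₇ n m) ::
        ((((List.finRange (m + 2)).drop ((j : ℕ) + 1)).map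
          (fun j' => (Sum.inl (i, b, j') : A₁₇ n m))) ++ [Sum.inr i]) := by
  have hlen : (j : ℕ) < (List.finRange (m + 2)).length := by simp [j.isLt]
  conv_lhs => rw [QP, ← List.take_append_drop (j : ℕ) (List.finRange (m + 2)),
    List.drop_eq_getElem_cons hlen]
  rw [getElem_finRange' _ _ hlen]
  simp [QP]

lemma not_mem_take_map (i : Fin n) (b : Bool) (j : Fin (m + 2)) :
    (Sum.inl (i, b, j) : A₁₇ n m) ∉ ((List.finRange (m + 2)).take (j : ℕ)).map
      (fun j' => (Sum.inl (i, b, j') : A₁₇ n m)) := by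
  intro h
  simp only [List.mem_map] at h
  obtain ⟨j', hj', he⟩ := h
  injection he with he; injection he with h1 h2; injection h2 with h3 h4
  obtain rfl : j' = j := h4
  obtain ⟨k, hk, hke⟩ := List.mem_take_iff_getElem.1 hj'
  rw [getElem_finRange' _ _ (lt_of_lt_of_le hk (min_le_right _ _))] at hke
  have hkv : k = (j' : ℕ) := congrArg Fin.val hke
  have hk2 : k < (j' : ℕ) := lt_of_lt_of_le hk (min_le_left _ _)
  omega

lemma not_mem_map_inr (i i' : Fin n) (b : Bool) (l : List (Fin (m + 2))) :
    (Sum.inr i : A₁₇ n m) ∉ l.map (fun j' => (Sum.inl (i', b, j') : A₁₇ n m)) := by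
  simp

lemma prefixTime_QP_inl (i : Fin n) (b : Bool) (j : Fin (m + 2)) :
    (N₁₇ n m C).prefixTime (QP m i b) (Sum.inl (i, b, j)) = (j : ℕ) := by
  rw [Network.prefixTime, QP_split i b j,
    takeWhile_ne_middle _ _ _ (not_mem_take_map i b j), tau_sum]
  simp [Nat.min_eq_left j.isLt.le]

lemma suffixTime_QP_inl (i : Fin n) (b : Bool) (j : Fin (m + 2)) :
    (N₁₇ n m C).suffixTime (QP m i b) (Sum.inl (i, b, j)) = m + 3 - (j : ℕ) := by
  rw [Network.suffixTime, QP_split i b j,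
    dropWhile_ne_middle _ _ _ (not_mem_take_map i b j), tau_sum]
  have := j.isLt
  simp [List.length_drop]
  omega

lemma prefixTime_QP_inr (i : Fin n) (b : Bool) :
    (N₁₇ n m C).prefixTime (QP m i b) (Sum.inr i) = m + 2 := by
  rw [Network.prefixTime, QP,
    takeWhile_ne_middle _ _ _ (not_mem_map_inr i i b _), tau_sum]
  simp

lemma suffixTime_QP_inr (i : Fin n) (b : Bool) :
    (N₁₇ n m C).suffixTime (QP m i b) (Sum.inr i) = 1 := by
  rw [Network.suffixTime, QP,
    dropWhile_ne_middle _ _ _ (not_mem_map_inr i i b _), tau_sum]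
  simp


lemma chain'_QP (i : Fin n) (b : Bool) :
    List.Chain' (fun a e => (N₁₇ n m C).head a = (N₁₇ n m C).tail e) (QP m i b) := by
  rw [QP]; show List.IsChain _ _; rw [List.isChain_append]
  refine ⟨?_, by simp, ?_⟩
  · rw [List.isChain_map, List.isChain_iff_getElem]
    intro k hk
    simp only [List.length_finRange] at hk
    simp only [List.getElem_finRange, Fin.cast_mk]
    simp only [N_head_inl, N_tail_inl]
    rw [if_neg (by omega), if_neg (by simp)]
    simp
  · intro x hx y hy
    have hlast : (((List.finRange (m+2)).map fun j => (Sum.inl (i,b,j) : A₁₇ n m))).getLast?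
        = some (Sum.inl (i, b, ⟨m+1, by omega⟩)) := by
      rw [List.getLast?_eq_getElem?]
      simp only [List.length_map, List.length_finRange]
      rw [List.getElem?_eq_getElem (by simp)]
      simp only [List.getElem_map]
      rw [getElem_finRange' _ _ (by simp)]
      norm_num
    rw [hlast] at hx
    simp only [Option.mem_def, Option.some.injEq] at hx
    subst hx
    simp only [List.head?_cons, Option.mem_def, Option.some.injEq] at hy
    subst hy
    simp

lemma head?_QP (i : Fin n) (b : Bool) :
    (QP m i b).head? = some (Sum.inl (i, b, ⟨0, by omega⟩)) := by
  rw [QP_split i b ⟨0, by omega⟩]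
  simp

lemma getLast?_QP (i : Fin n) (b : Bool) :
    (QP m i b).getLast? = some (Sum.inr i) := by
  rw [QP]
  exact List.getLast?_concat

lemma nodes_QP_nodup (i : Fin n) (b : Bool) :
    ((N₁₇ n m C).nodes (QP m i b)).Nodup := by
  have h0 : QP m i b = (Sum.inl (i, b, ⟨0, by omega⟩) : A₁₇ n m) ::
      ((((List.finRange (m+2)).drop 1).map fun j' => (Sum.inl (i,b,j') : A₁₇ n m))
        ++ [Sum.inr i]) := by
    rw [QP_split i b ⟨0, by omega⟩]
    simp
  have hmap : (QP m i b).map (N₁₇ n m C).head =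
      ((List.finRange (m+2)).map fun j : Fin (m+2) =>
        (if (j : ℕ) = m + 1 then Sum.inr (Sum.inl i)
          else Sum.inr (Sum.inr (i, b, (j : ℕ))) : V₁₇ n)) ++ [Sum.inl 1] := by
    rw [QP, List.map_append, List.map_map]
    rfl
  have hnodes : (N₁₇ n m C).nodes (QP m i b) =
      Sum.inl 0 :: (QP m i b).map (N₁₇ n m C).head := by
    rw [h0, Network.nodes, ← h0]
    simp
  rw [hnodes, hmap]
  have hginj : Function.Injective (fun j : Fin (m+2) =>
      (if (j : ℕ) = m + 1 then Sum.inr (Sum.inl i)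
        else Sum.inr (Sum.inr (i, b, (j : ℕ))) : V₁₇ n)) := by
    intro j k h
    simp only at h
    rcases eq_or_ne (j : ℕ) (m+1) with hj | hj <;>
      rcases eq_or_ne (k : ℕ) (m+1) with hk | hk
    · exact Fin.ext (hj.trans hk.symm)
    · rw [if_pos hj, if_neg hk] at h
      exact absurd h (by simp)
    · rw [if_neg hj, if_pos hk] at h
      exact absurd h (by simp)
    · rw [if_neg hj, if_neg hk] at h
      simp only [Sum.inr.injEq, Prod.mk.injEq] at h
      exact Fin.ext h.2.2
  rw [List.nodup_cons, List.nodup_append]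
  refine ⟨?_, (List.nodup_finRange _).map hginj, by simp, ?_⟩
  · simp only [List.mem_append, List.mem_map, List.mem_finRange]
    rintro (⟨j, hj⟩ | hj)
    · split at hj <;> simp at hj
    · simp at hj
  · simp only [List.Disjoint, List.mem_map, List.mem_finRange, List.mem_singleton]
    rintro x ⟨j, -, rfl⟩ hx
    intro hx2; subst hx2; split <;> simp

lemma isSTPath_QP (i : Fin n) (b : Bool) : (N₁₇ n m C).IsSTPath (QP m i b) := by
  refine ⟨QP_ne_nil i b, chain'_QP i b, ?_, ?_, nodes_QP_nodup i b⟩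
  · rw [head?_QP]
    rintro a ha
    simp only [Option.mem_def, Option.some.injEq] at ha
    subst ha
    simp
  · rw [getLast?_QP]
    rintro a ha
    simp only [Option.mem_def, Option.some.injEq] at ha
    subst ha
    simp

lemma step_from_inl {i : Fin n} {b : Bool} {j : Fin (m+2)} {e : A₁₇ n m}
    (h : (N₁₇ n m C).head (Sum.inl (i,b,j)) = (N₁₇ n m C).tail e) :
    (((j:ℕ) = m + 1) ∧ e = Sum.inr i) ∨
      (∃ hlt : (j:ℕ) < m + 1, e = Sum.inl (i, b, ⟨(j:ℕ)+1, Nat.succ_lt_succ hlt⟩)) := by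
  rcases e with ⟨i', b', j'⟩ | i'
  · rw [N_head_inl, N_tail_inl] at h
    rcases eq_or_ne (j:ℕ) (m+1) with hj | hj <;>
      rcases eq_or_ne (j':ℕ) 0 with hj' | hj'
    · rw [if_pos hj, if_pos hj'] at h
      exact absurd h (by simp)
    · rw [if_pos hj, if_neg hj'] at h
      exact absurd h (by simp)
    · rw [if_neg hj, if_pos hj'] at h
      exact absurd h (by simp)
    · rw [if_neg hj, if_neg hj'] at h
      simp only [Sum.inr.injEq, Prod.mk.injEq] at h
      obtain ⟨rfl, rfl, hjj⟩ := h
      have hj'v : (j' : ℕ) = (j : ℕ) + 1 := by omega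
      refine Or.inr ⟨by omega, ?_⟩
      simp only [Sum.inl.injEq, Prod.mk.injEq]
      exact ⟨trivial, trivial, Fin.ext hj'v⟩
  · rw [N_head_inl, N_tail_inr] at h
    rcases eq_or_ne (j:ℕ) (m+1) with hj | hj
    · rw [if_pos hj] at h
      simp only [Sum.inr.injEq, Sum.inl.injEq] at h
      exact Or.inl ⟨hj, by rw [h]⟩
    · rw [if_neg hj] at h
      exact absurd h (by simp)

lemma no_from_inr {i : Fin n} {e : A₁₇ n m}
    (h : (N₁₇ n m C).head (Sum.inr i) = (N₁₇ n m C).tail e) : False := by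
  rcases e with ⟨i', b', j'⟩ | i'
  · rcases eq_or_ne (j':ℕ) 0 with hj' | hj' <;> simp [hj'] at h
  · simp at h

lemma suffix_classify :
    ∀ (p : List (A₁₇ n m)) (i : Fin n) (b : Bool) (j : Fin (m + 2)),
      List.Chain' (fun a e => (N₁₇ n m C).head a = (N₁₇ n m C).tail e)
        (Sum.inl (i,b,j) :: p) →
      (∀ a ∈ (Sum.inl (i,b,j) :: p).getLast?, (N₁₇ n m C).head a = Sum.inl 1) →
      (Sum.inl (i,b,j) : A₁₇ n m) :: p =
        (((List.finRange (m+2)).drop (j:ℕ)).map fun j' => (Sum.inl (i,b,j') : A₁₇ n m))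
          ++ [Sum.inr i]
  | [], i, b, j, hch, hlast => by
    exfalso
    have h := hlast (Sum.inl (i,b,j)) (by simp)
    rcases eq_or_ne (j:ℕ) (m+1) with hj | hj <;> simp [hj] at h
  | e :: p, i, b, j, hch, hlast => by
    have hd : ((List.finRange (m+2)).drop (j:ℕ)) =
        j :: (List.finRange (m+2)).drop ((j:ℕ)+1) := by
      rw [List.drop_eq_getElem_cons (by simp [j.isLt])]
      rw [getElem_finRange' _ _ (by simp [j.isLt])]
    have hstep : (N₁₇ n m C).head (Sum.inl (i,b,j)) = (N₁₇ n m C).tail e :=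
      (List.isChain_cons_cons.1 hch).1
    rcases step_from_inl hstep with ⟨hj, rfl⟩ | ⟨hj, rfl⟩
    · rcases p with _ | ⟨e', p⟩
      · have hd2 : ((List.finRange (m+2)).drop (j:ℕ)) = [j] := by
          rw [hd, List.drop_eq_nil_of_le (by simp; omega)]
        rw [hd2]
        simp
      · exfalso
        exact no_from_inr ((List.isChain_cons_cons.1 (List.isChain_cons_cons.1 hch).2).1)
    · have IH := suffix_classify p i b ⟨(j:ℕ)+1, by omega⟩
        (List.isChain_cons_cons.1 hch).2
        (fun a ha => hlast a (by rwa [List.getLast?_cons_cons]))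
      rw [hd, List.map_cons, List.cons_append]
      exact congrArg (List.cons _) IH
  termination_by p => p.length

lemma classify {p : List (A₁₇ n m)} (hp : (N₁₇ n m C).IsSTPath p) :
    ∃ i b, p = QP m i b := by
  obtain ⟨hne, hch, hhd, hlast, -⟩ := hp
  rcases p with _ | ⟨a, p⟩
  · exact absurd rfl hne
  have ha := hhd a rfl
  rcases a with ⟨i, b, j⟩ | i
  · have hj : (j:ℕ) = 0 := by
      by_contra hj
      simp [hj] at ha
    have hje : j = ⟨0, Nat.succ_pos _⟩ := Fin.ext hj
    subst hje
    refine ⟨i, b, ?_⟩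
    have := suffix_classify p i b ⟨0, by omega⟩ hch (by simpa using hlast)
    rw [this, QP]
    simp
  · simp at ha


section Reduce

variable (y : List (A₁₇ n m) → ℝ)

open Classical in
lemma finsum_reduce (F : List (A₁₇ n m) → ℝ)
    (hF : ∀ p, F p ≠ 0 → ∃ i b, p = QP m i b) (S : Set (List (A₁₇ n m))) :
    ∑ᶠ p ∈ S, F p =
      ∑ ib : Fin n × Bool, S.indicator F (QP m ib.1 ib.2) := by
  apply finsum_mem_of_inj _ QP_injective
  intro p hp
  obtain ⟨i, b, rfl⟩ := hF p hp
  exact ⟨(i, b), rfl⟩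

lemma staticOf_inl (hsupp : ∀ p, y p ≠ 0 → ∃ i b, p = QP m i b)
    (i : Fin n) (b : Bool) (j : Fin (m + 2)) :
    (N₁₇ n m C).staticOf y (Sum.inl (i, b, j)) = y (QP m i b) := by
  classical
  rw [Network.staticOf, finsum_reduce y hsupp _]
  have hterm : ∀ ib : Fin n × Bool,
      Set.indicator {p : List (A₁₇ n m) | Sum.inl (i,b,j) ∈ p} y (QP m ib.1 ib.2) =
        if (i, b) = ib then y (QP m ib.1 ib.2) else 0 := by
    intro ib
    by_cases hc : (i, b) = ib
    · rw [if_pos hc, Set.indicator_of_mem]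
      obtain ⟨rfl, rfl⟩ : i = ib.1 ∧ b = ib.2 := by rw [← hc]; exact ⟨rfl, rfl⟩
      exact mem_QP_inl.2 ⟨rfl, rfl⟩
    · rw [if_neg hc, Set.indicator_of_notMem]
      intro hmem
      obtain ⟨rfl, rfl⟩ := mem_QP_inl.1 hmem
      exact hc rfl
  rw [Finset.sum_congr rfl (fun ib _ => hterm ib), Finset.sum_ite_eq]
  simp

lemma staticOf_inr (hsupp : ∀ p, y p ≠ 0 → ∃ i b, p = QP m i b) (i : Fin n) :
    (N₁₇ n m C).staticOf y (Sum.inr i) = y (QP m i true) + y (QP m i false) := by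
  classical
  rw [Network.staticOf, finsum_reduce y hsupp _]
  have hterm : ∀ ib : Fin n × Bool,
      Set.indicator {p : List (A₁₇ n m) | (Sum.inr i : A₁₇ n m) ∈ p} y (QP m ib.1 ib.2) =
        if i = ib.1 then y (QP m ib.1 ib.2) else 0 := by
    intro ib
    by_cases hc : i = ib.1
    · rw [if_pos hc, Set.indicator_of_mem]
      exact mem_QP_inr.2 hc
    · rw [if_neg hc, Set.indicator_of_notMem]
      intro hmem
      exact hc (mem_QP_inr.1 hmem)
  rw [Finset.sum_congr rfl (fun ib _ => hterm ib), Fintype.sum_prod_type]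
  rw [Finset.sum_eq_single i (fun i' _ hne => by
    rw [Finset.sum_eq_zero]
    intro b _
    rw [if_neg (fun h => hne h.symm)]) (fun h => absurd (Finset.mem_univ i) h)]
  simp [Fintype.sum_bool]

lemma trValue_eq (hsupp : ∀ p, y p ≠ 0 → ∃ i b, p = QP m i b) :
    (N₁₇ n m C).trValue y ((m + 4 : ℕ) : ℝ) =
      ∑ ib : Fin n × Bool, y (QP m ib.1 ib.2) := by
  classical
  rw [Network.trValue, finsum_reduce (fun p => y p * (((m+4:ℕ):ℝ) - ((N₁₇ n m C).pathTime p : ℝ)))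
    (fun p h => hsupp p (fun h0 => h (by simp [h0]))) _]
  refine Finset.sum_congr rfl fun ib _ => ?_
  rw [Set.indicator_of_mem]
  · rw [pathTime_QP]
    have : ((m + 4 : ℕ) : ℝ) - ((m + 3 : ℕ) : ℝ) = 1 := by push_cast; ring
    rw [this, mul_one]
  · refine ⟨isSTPath_QP ib.1 ib.2, ?_⟩
    rw [pathTime_QP]
    push_cast
    linarith

lemma trRate_inl (hsupp : ∀ p, y p ≠ 0 → ∃ i b, p = QP m i b)
    (i : Fin n) (b : Bool) (j : Fin (m + 2)) (θ : ℝ) :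
    (N₁₇ n m C).trRate y ((m + 4 : ℕ) : ℝ) (Sum.inl (i, b, j)) θ =
      if ((j : ℕ) : ℝ) ≤ θ ∧ θ < ((j : ℕ) : ℝ) + 1 then y (QP m i b) else 0 := by
  classical
  rw [Network.trRate, finsum_reduce y hsupp _]
  have hterm : ∀ ib : Fin n × Bool,
      Set.indicator {p : List (A₁₇ n m) | (N₁₇ n m C).IsSTPath p ∧
        ((N₁₇ n m C).pathTime p : ℝ) ≤ ((m + 4 : ℕ) : ℝ) ∧ Sum.inl (i,b,j) ∈ p ∧
        ((N₁₇ n m C).prefixTime p (Sum.inl (i,b,j)) : ℝ) ≤ θ ∧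
        ((N₁₇ n m C).suffixTime p (Sum.inl (i,b,j)) : ℝ) < ((m + 4 : ℕ) : ℝ) - θ}
        y (QP m ib.1 ib.2) =
      (if ((i, b) = ib ∧ (((j : ℕ) : ℝ) ≤ θ ∧ θ < ((j : ℕ) : ℝ) + 1))
        then y (QP m ib.1 ib.2) else 0) := by
    intro ib
    by_cases hc : ((i, b) = ib ∧ (((j : ℕ) : ℝ) ≤ θ ∧ θ < ((j : ℕ) : ℝ) + 1))
    · rw [if_pos hc, Set.indicator_of_mem]
      obtain ⟨hc1, h1, h2⟩ := hc
      obtain ⟨rfl, rfl⟩ : i = ib.1 ∧ b = ib.2 := by rw [← hc1]; exact ⟨rfl, rfl⟩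
      refine ⟨isSTPath_QP ib.1 ib.2, ?_, mem_QP_inl.2 ⟨rfl, rfl⟩, ?_, ?_⟩
      · rw [pathTime_QP]; push_cast; linarith
      · rw [prefixTime_QP_inl]; exact h1
      · rw [suffixTime_QP_inl, Nat.cast_sub (by have := j.isLt; omega)]
        push_cast
        linarith
    · rw [if_neg hc, Set.indicator_of_notMem]
      rintro ⟨-, -, hmem, hpre, hsuf⟩
      obtain ⟨rfl, rfl⟩ := mem_QP_inl.1 hmem
      rw [prefixTime_QP_inl] at hpre
      rw [suffixTime_QP_inl, Nat.cast_sub (by have := j.isLt; omega)] at hsuf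
      push_cast at hsuf
      exact hc ⟨rfl, hpre, by linarith⟩
  rw [Finset.sum_congr rfl (fun ib _ => hterm ib)]
  by_cases hw : ((j : ℕ) : ℝ) ≤ θ ∧ θ < ((j : ℕ) : ℝ) + 1
  · simp only [hw, and_true]
    rw [Finset.sum_ite_eq]
    simp [hw]
  · rw [if_neg hw, Finset.sum_eq_zero]
    intro ib _
    rw [if_neg (fun h => hw h.2)]

lemma trRate_inr (hsupp : ∀ p, y p ≠ 0 → ∃ i b, p = QP m i b) (i : Fin n) (θ : ℝ) :
    (N₁₇ n m C).trRate y ((m + 4 : ℕ) : ℝ) (Sum.inr i) θ =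
      if ((m : ℝ) + 2) ≤ θ ∧ θ < (m : ℝ) + 3 then y (QP m i true) + y (QP m i false)
        else 0 := by
  classical
  rw [Network.trRate, finsum_reduce y hsupp _]
  have hterm : ∀ ib : Fin n × Bool,
      Set.indicator {p : List (A₁₇ n m) | (N₁₇ n m C).IsSTPath p ∧
        ((N₁₇ n m C).pathTime p : ℝ) ≤ ((m + 4 : ℕ) : ℝ) ∧ (Sum.inr i : A₁₇ n m) ∈ p ∧
        ((N₁₇ n m C).prefixTime p (Sum.inr i) : ℝ) ≤ θ ∧
        ((N₁₇ n m C).suffixTime p (Sum.inr i) : ℝ) < ((m + 4 : ℕ) : ℝ) - θ}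
        y (QP m ib.1 ib.2) =
      (if (i = ib.1 ∧ (((m : ℝ) + 2) ≤ θ ∧ θ < (m : ℝ) + 3))
        then y (QP m ib.1 ib.2) else 0) := by
    intro ib
    by_cases hc : (i = ib.1 ∧ (((m : ℝ) + 2) ≤ θ ∧ θ < (m : ℝ) + 3))
    · rw [if_pos hc, Set.indicator_of_mem]
      obtain ⟨rfl, h1, h2⟩ := hc
      refine ⟨isSTPath_QP ib.1 ib.2, ?_, mem_QP_inr.2 rfl, ?_, ?_⟩
      · rw [pathTime_QP]; push_cast; linarith
      · rw [prefixTime_QP_inr]; push_cast; linarith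
      · rw [suffixTime_QP_inr]; push_cast; linarith
    · rw [if_neg hc, Set.indicator_of_notMem]
      rintro ⟨-, -, hmem, hpre, hsuf⟩
      obtain rfl := mem_QP_inr.1 hmem
      rw [prefixTime_QP_inr] at hpre
      rw [suffixTime_QP_inr] at hsuf
      push_cast at hpre hsuf
      exact hc ⟨rfl, by linarith, by linarith⟩
  rw [Finset.sum_congr rfl (fun ib _ => hterm ib)]
  by_cases hw : ((m : ℝ) + 2) ≤ θ ∧ θ < (m : ℝ) + 3
  · rw [if_pos hw]
    simp only [hw, and_true]
    rw [Fintype.sum_prod_type]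
    rw [Finset.sum_eq_single i (fun i' _ hne => by
      rw [Finset.sum_eq_zero]
      intro b _
      rw [if_neg (fun h => hne h.symm)]) (fun h => absurd (Finset.mem_univ i) h)]
    simp [Fintype.sum_bool]
  · rw [if_neg hw, Finset.sum_eq_zero]
    intro ib _
    rw [if_neg (fun h => hw h.2)]

end Reduce


section Integration

lemma intervalIntegrable_window (A B cc u v : ℝ) :
    IntervalIntegrable (fun θ => if A ≤ θ ∧ θ < B then cc else 0) volume u v := by
  have h : (fun θ => if A ≤ θ ∧ θ < B then cc else 0)
      = (Set.Ico A B).indicator (fun _ => cc) := by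
    funext θ
    by_cases hθ : A ≤ θ ∧ θ < B
    · rw [if_pos hθ, Set.indicator_of_mem (Set.mem_Ico.2 hθ)]
    · rw [if_neg hθ, Set.indicator_of_notMem (fun hm => hθ (Set.mem_Ico.1 hm))]
  rw [h]
  apply MeasureTheory.Integrable.intervalIntegrable
  refine MeasureTheory.IntegrableOn.integrable_indicator ?_ measurableSet_Ico
  exact MeasureTheory.integrableOn_const
    (by rw [Real.volume_Ico]; exact ENNReal.ofReal_ne_top)

lemma integral_window (u cc : ℝ) :
    ∫ ξ in u..(u+1), (if u ≤ ξ ∧ ξ < u + 1 then cc else 0) = cc := by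
  rw [intervalIntegral.integral_of_le (by linarith)]
  rw [MeasureTheory.integral_Ioc_eq_integral_Ioo]
  rw [MeasureTheory.setIntegral_congr_fun measurableSet_Ioo
    (g := fun _ => cc) ?_]
  · rw [MeasureTheory.setIntegral_const, Real.volume_real_Ioo]
    norm_num
  · intro x hx
    simp only [Set.mem_Ioo] at hx
    simp only
    rw [if_pos ⟨hx.1.le, hx.2⟩]

variable (y : List (A₁₇ n m) → ℝ)

/-- The total cost rate at time `ξ`. -/
noncomputable def FF (C : Fin m → Fin 3 → Fin n × Bool) (y : List (A₁₇ n m) → ℝ) : ℝ → ℝ :=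
  fun ξ =>
  ∑ a : A₁₇ n m, ((N₁₇ n m C).c a : ℝ) * (N₁₇ n m C).trRate y ((m + 4 : ℕ) : ℝ) a ξ

variable (hsupp : ∀ p, y p ≠ 0 → ∃ i b, p = QP m i b)

lemma trRate_II (hsupp : ∀ p, y p ≠ 0 → ∃ i b, p = QP m i b) (a : A₁₇ n m) (u v : ℝ) :
    IntervalIntegrable ((N₁₇ n m C).trRate y ((m + 4 : ℕ) : ℝ) a) volume u v := by
  rcases a with ⟨i, b, j⟩ | i
  · have h : ((N₁₇ n m C).trRate y ((m + 4 : ℕ) : ℝ) (Sum.inl (i, b, j))) =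
        fun θ => if ((j : ℕ) : ℝ) ≤ θ ∧ θ < ((j : ℕ) : ℝ) + 1 then y (QP m i b) else 0 :=
      funext (trRate_inl y hsupp i b j)
    rw [h]
    exact intervalIntegrable_window _ _ _ _ _
  · have h : ((N₁₇ n m C).trRate y ((m + 4 : ℕ) : ℝ) (Sum.inr i)) =
        fun θ => if ((m : ℝ) + 2) ≤ θ ∧ θ < (m : ℝ) + 3
          then y (QP m i true) + y (QP m i false) else 0 :=
      funext (trRate_inr y hsupp i)
    rw [h]
    exact intervalIntegrable_window _ _ _ _ _

lemma FF_II (hsupp : ∀ p, y p ≠ 0 → ∃ i b, p = QP m i b) (u v : ℝ) :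
    IntervalIntegrable (FF C y) volume u v := by
  unfold FF
  have h2 := IntervalIntegrable.sum (μ := MeasureTheory.volume) (a := u) (b := v)
    (f := fun a ξ => ((N₁₇ n m C).c a : ℝ) * (N₁₇ n m C).trRate y ((m + 4 : ℕ) : ℝ) a ξ)
    Finset.univ (fun a _ => (trRate_II y hsupp a u v).const_mul _)
  have heq : (∑ a : A₁₇ n m, fun ξ =>
      ((N₁₇ n m C).c a : ℝ) * (N₁₇ n m C).trRate y ((m + 4 : ℕ) : ℝ) a ξ) =
      fun ξ => ∑ a : A₁₇ n m,
      ((N₁₇ n m C).c a : ℝ) * (N₁₇ n m C).trRate y ((m + 4 : ℕ) : ℝ) a ξ := by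
    funext ξ
    rw [Finset.sum_apply]
  rwa [heq] at h2

lemma costAt_eq (hsupp : ∀ p, y p ≠ 0 → ∃ i b, p = QP m i b) (θ : ℝ) :
    (N₁₇ n m C).costAt ((N₁₇ n m C).trRate y ((m + 4 : ℕ) : ℝ)) θ =
      ∫ ξ in (θ-1)..θ, FF C y ξ := by
  rw [Network.costAt]
  have h1 : ∀ a : A₁₇ n m, ((N₁₇ n m C).c a : ℝ) *
      (∫ ξ in (θ - ((N₁₇ n m C).τ a : ℝ))..θ, (N₁₇ n m C).trRate y ((m + 4 : ℕ) : ℝ) a ξ) =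
      ∫ ξ in (θ-1)..θ, ((N₁₇ n m C).c a : ℝ) *
        (N₁₇ n m C).trRate y ((m + 4 : ℕ) : ℝ) a ξ := by
    intro a
    rw [N_tau, Nat.cast_one, ← intervalIntegral.integral_const_mul]
  rw [Finset.sum_congr rfl (fun a _ => h1 a),
    ← intervalIntegral.integral_finset_sum (fun a _ => (trRate_II y hsupp a _ _).const_mul _)]
  rfl

lemma costAt_le (hsupp : ∀ p, y p ≠ 0 → ∃ i b, p = QP m i b) (θ : ℝ) (B : ℝ)
    (hB : ∀ ξ, FF C y ξ ≤ B) :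
    (N₁₇ n m C).costAt ((N₁₇ n m C).trRate y ((m + 4 : ℕ) : ℝ)) θ ≤ B := by
  rw [costAt_eq y hsupp θ]
  calc ∫ ξ in (θ-1)..θ, FF C y ξ ≤ ∫ _ in (θ-1)..θ, B :=
        intervalIntegral.integral_mono_on (by linarith) (FF_II y hsupp _ _)
          intervalIntegrable_const (fun ξ _ => hB ξ)
    _ = B := by
        rw [intervalIntegral.integral_const, smul_eq_mul]
        ring

lemma le_costAt (hsupp : ∀ p, y p ≠ 0 → ∃ i b, p = QP m i b) (u cc : ℝ)
    (hpt : ∀ ξ, ξ ∈ Set.Ico u (u+1) → cc ≤ FF C y ξ) (h0 : ∀ ξ, 0 ≤ FF C y ξ) :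
    cc ≤ (N₁₇ n m C).costAt ((N₁₇ n m C).trRate y ((m + 4 : ℕ) : ℝ)) (u + 1) := by
  rw [costAt_eq y hsupp (u+1)]
  have hb : u + 1 - 1 = u := by ring
  rw [hb]
  calc cc = ∫ ξ in u..(u+1), (if u ≤ ξ ∧ ξ < u + 1 then cc else 0) :=
        (integral_window u cc).symm
    _ ≤ ∫ ξ in u..(u+1), FF C y ξ := by
        refine intervalIntegral.integral_mono_on (by linarith)
          (intervalIntegrable_window _ _ _ _ _) (FF_II y hsupp _ _) (fun ξ _ => ?_)
        by_cases hcond : u ≤ ξ ∧ ξ < u + 1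
        · rw [if_pos hcond]
          exact hpt ξ hcond
        · rw [if_neg hcond]
          exact h0 ξ

lemma trRate_nonneg (hsupp : ∀ p, y p ≠ 0 → ∃ i b, p = QP m i b)
    (hy0 : ∀ p, 0 ≤ y p) (a : A₁₇ n m) (θ : ℝ) :
    0 ≤ (N₁₇ n m C).trRate y ((m + 4 : ℕ) : ℝ) a θ := by
  rcases a with ⟨i, b, j⟩ | i
  · rw [trRate_inl y hsupp]
    split_ifs
    · exact hy0 _
    · exact le_refl 0
  · rw [trRate_inr y hsupp]
    split_ifs
    · exact add_nonneg (hy0 _) (hy0 _)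
    · exact le_refl 0

lemma FF_nonneg (hsupp : ∀ p, y p ≠ 0 → ∃ i b, p = QP m i b)
    (hy0 : ∀ p, 0 ≤ y p) (ξ : ℝ) : 0 ≤ FF C y ξ := by
  refine Finset.sum_nonneg fun a _ => ?_
  exact mul_nonneg (Nat.cast_nonneg _) (trRate_nonneg y hsupp hy0 a ξ)

lemma trRate_le_SY (hsupp : ∀ p, y p ≠ 0 → ∃ i b, p = QP m i b)
    (hy0 : ∀ p, 0 ≤ y p) (a : A₁₇ n m) (θ : ℝ) :
    (N₁₇ n m C).trRate y ((m + 4 : ℕ) : ℝ) a θ ≤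
      ∑ ib : Fin n × Bool, y (QP m ib.1 ib.2) := by
  have hnn : ∀ ib ∈ (Finset.univ : Finset (Fin n × Bool)), 0 ≤ y (QP m ib.1 ib.2) :=
    fun ib _ => hy0 _
  rcases a with ⟨i, b, j⟩ | i
  · rw [trRate_inl y hsupp]
    split_ifs
    · exact Finset.single_le_sum hnn (Finset.mem_univ (i, b))
    · exact Finset.sum_nonneg hnn
  · rw [trRate_inr y hsupp]
    split_ifs
    · have hp : ((i, true) : Fin n × Bool) ≠ (i, false) := by simp
      have := Finset.sum_pair (f := fun ib : Fin n × Bool => y (QP m ib.1 ib.2)) hp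
      calc y (QP m i true) + y (QP m i false)
          = ∑ ib ∈ ({(i, true), (i, false)} : Finset (Fin n × Bool)), y (QP m ib.1 ib.2) := this.symm
        _ ≤ ∑ ib : Fin n × Bool, y (QP m ib.1 ib.2) :=
            Finset.sum_le_sum_of_subset_of_nonneg (Finset.subset_univ _)
              (fun ib _ _ => hy0 _)
    · exact Finset.sum_nonneg hnn

lemma FF_le_bound (hsupp : ∀ p, y p ≠ 0 → ∃ i b, p = QP m i b)
    (hy0 : ∀ p, 0 ≤ y p) (ξ : ℝ) :
    FF C y ξ ≤ ∑ a : A₁₇ n m, ((N₁₇ n m C).c a : ℝ) *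
      (∑ ib : Fin n × Bool, y (QP m ib.1 ib.2)) := by
  refine Finset.sum_le_sum fun a _ => ?_
  exact mul_le_mul_of_nonneg_left (trRate_le_SY y hsupp hy0 a ξ) (Nat.cast_nonneg _)

lemma trPeakCost_le (hsupp : ∀ p, y p ≠ 0 → ∃ i b, p = QP m i b) (B : ℝ) (hB0 : 0 ≤ B)
    (hB : ∀ ξ, FF C y ξ ≤ B) :
    (N₁₇ n m C).trPeakCost y ((m + 4 : ℕ) : ℝ) ≤ B := by
  rw [Network.trPeakCost, Network.peakCost]
  refine Real.sSup_le ?_ hB0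
  rintro x ⟨θ, -, rfl⟩
  exact costAt_le y hsupp θ B hB

lemma le_trPeakCost (hsupp : ∀ p, y p ≠ 0 → ∃ i b, p = QP m i b)
    (hy0 : ∀ p, 0 ≤ y p) (θ : ℝ) (hθ : θ ∈ Set.Ico (0:ℝ) ((m + 4 : ℕ) : ℝ)) :
    (N₁₇ n m C).costAt ((N₁₇ n m C).trRate y ((m + 4 : ℕ) : ℝ)) θ ≤
      (N₁₇ n m C).trPeakCost y ((m + 4 : ℕ) : ℝ) := by
  rw [Network.trPeakCost, Network.peakCost]
  refine le_csSup ?_ (Set.mem_image_of_mem _ hθ)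
  refine ⟨∑ a : A₁₇ n m, ((N₁₇ n m C).c a : ℝ) * (∑ ib : Fin n × Bool, y (QP m ib.1 ib.2)), ?_⟩
  rintro x ⟨θ', -, rfl⟩
  exact costAt_le y hsupp θ' _ (FF_le_bound y hsupp hy0)

end Integration


section Combinatorics

@[simp] lemma N_c_inl (i : Fin n) (b : Bool) (j : Fin (m + 2)) :
    (N₁₇ n m C).c (Sum.inl (i, b, j)) =
      if h : 1 ≤ (j : ℕ) ∧ (j : ℕ) ≤ m then
        (if ∃ r : Fin 3, C ⟨(j : ℕ) - 1, by omega⟩ r = (i, !b) then 1 else 0)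
      else 0 := rfl

variable (y : List (A₁₇ n m) → ℝ)

lemma FF_eq (ξ : ℝ) : FF C y ξ =
    ∑ i : Fin n, ∑ b : Bool, ∑ j : Fin (m + 2),
      ((N₁₇ n m C).c (Sum.inl (i, b, j)) : ℝ) *
        (N₁₇ n m C).trRate y ((m + 4 : ℕ) : ℝ) (Sum.inl (i, b, j)) ξ := by
  unfold FF
  rw [Fintype.sum_sum_type]
  have h2 : (∑ i : Fin n, ((N₁₇ n m C).c (Sum.inr i) : ℝ) *
      (N₁₇ n m C).trRate y ((m + 4 : ℕ) : ℝ) (Sum.inr i) ξ) = 0 := by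
    refine Finset.sum_eq_zero fun i _ => ?_
    rw [N_c_inr]
    norm_num
  rw [h2, add_zero, Fintype.sum_prod_type]
  refine Finset.sum_congr rfl fun i _ => ?_
  rw [Fintype.sum_prod_type]

/-- For each chain position, at most two of the chosen chain arcs have cost 1,
provided the assignment satisfies the formula. -/
lemma cost_col_le_two (α : Fin n → Bool) (hα : ∀ j : Fin m, ∃ r : Fin 3, α (C j r).1 = (C j r).2)
    (j : Fin (m + 2)) :
    ∑ i : Fin n, ((N₁₇ n m C).c (Sum.inl (i, α i, j)) : ℝ) ≤ 2 := by
  classical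
  by_cases hj : 1 ≤ (j : ℕ) ∧ (j : ℕ) ≤ m
  · have hcval : ∀ i : Fin n, ((N₁₇ n m C).c (Sum.inl (i, α i, j)) : ℝ) =
        if ∃ r : Fin 3, C ⟨(j : ℕ) - 1, by omega⟩ r = (i, !(α i)) then 1 else 0 := by
      intro i
      rw [N_c_inl, dif_pos hj]
      split_ifs <;> norm_num
    rw [Finset.sum_congr rfl (fun i _ => hcval i), Finset.sum_boole]
    set jc : Fin m := ⟨(j : ℕ) - 1, by omega⟩
    obtain ⟨r₀, hr₀⟩ := hα jc
    have hcard : (Finset.univ.filter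
        (fun i : Fin n => ∃ r : Fin 3, C jc r = (i, !(α i)))).card ≤
        (Finset.univ.erase r₀).card := by
      have hex : ∀ i ∈ Finset.univ.filter
          (fun i : Fin n => ∃ r : Fin 3, C jc r = (i, !(α i))),
          ∃ r : Fin 3, C jc r = (i, !(α i)) := by
        intro i hi
        exact (Finset.mem_filter.1 hi).2
      refine Finset.card_le_card_of_injOn
        (fun i => if h : ∃ r : Fin 3, C jc r = (i, !(α i)) then h.choose else r₀) ?_ ?_
      · intro i hi
        obtain h := hex i hi
        dsimp only
        rw [dif_pos h]
        have hspec := h.choose_spec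
        refine Finset.mem_erase.2 ⟨?_, Finset.mem_univ _⟩
        intro he
        rw [he] at hspec
        rw [hspec] at hr₀
        simp at hr₀
      · intro i1 hi1 i2 hi2 heq
        have h1 := hex i1 (Finset.mem_coe.1 hi1)
        have h2 := hex i2 (Finset.mem_coe.1 hi2)
        dsimp only at heq
        rw [dif_pos h1, dif_pos h2] at heq
        have hs1 := h1.choose_spec
        have hs2 := h2.choose_spec
        rw [heq, hs2] at hs1
        exact ((Prod.ext_iff.1 hs1).1).symm
    have hcard2 : (Finset.univ.erase r₀).card = 2 := by
      rw [Finset.card_erase_of_mem (Finset.mem_univ _), Finset.card_univ]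
      simp
    calc ((Finset.univ.filter
        (fun i : Fin n => ∃ r : Fin 3, C jc r = (i, !(α i)))).card : ℝ)
        ≤ ((Finset.univ.erase r₀).card : ℝ) := by exact_mod_cast hcard
      _ = 2 := by rw [hcard2]; norm_num
  · have : ∀ i : Fin n, ((N₁₇ n m C).c (Sum.inl (i, α i, j)) : ℝ) = 0 := by
      intro i
      rw [N_c_inl, dif_neg hj]
      norm_num
    rw [Finset.sum_congr rfl (fun i _ => this i), Finset.sum_const, smul_zero]
    norm_num

lemma window_sum_le_one (ξ : ℝ) :
    ∑ j : Fin (m + 2), (if (((j:ℕ):ℝ) ≤ ξ ∧ ξ < ((j:ℕ):ℝ) + 1) then (1:ℝ) else 0) ≤ 1 := by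
  classical
  by_cases hex : ∃ j : Fin (m + 2), ((((j:ℕ):ℝ) ≤ ξ ∧ ξ < ((j:ℕ):ℝ) + 1))
  · obtain ⟨j0, hj0⟩ := hex
    have huniq : ∀ j : Fin (m + 2), ((((j:ℕ):ℝ) ≤ ξ ∧ ξ < ((j:ℕ):ℝ) + 1)) → j = j0 := by
      intro j hj
      have h1 : ((j:ℕ):ℝ) < ((j0:ℕ):ℝ) + 1 := lt_of_le_of_lt hj.1 hj0.2
      have h2 : ((j0:ℕ):ℝ) < ((j:ℕ):ℝ) + 1 := lt_of_le_of_lt hj0.1 hj.2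
      have h3 : (j:ℕ) < (j0:ℕ) + 1 := by exact_mod_cast h1
      have h4 : (j0:ℕ) < (j:ℕ) + 1 := by exact_mod_cast h2
      exact Fin.ext (by omega)
    rw [Finset.sum_eq_single j0
      (fun j _ hne => by rw [if_neg (fun hc => hne (huniq j hc))])
      (fun h => absurd (Finset.mem_univ j0) h)]
    rw [if_pos hj0]
  · rw [Finset.sum_eq_zero (fun j _ => if_neg (fun hc => hex ⟨j, hc⟩))]
    norm_num

lemma FF_le_two (α : Fin n → Bool) (hα : ∀ j : Fin m, ∃ r : Fin 3, α (C j r).1 = (C j r).2)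
    (hsupp : ∀ p, y p ≠ 0 → ∃ i b, p = QP m i b)
    (hYval : ∀ i b, y (QP m i b) = if b = α i then 1 else 0) (ξ : ℝ) :
    FF C y ξ ≤ 2 := by
  classical
  rw [FF_eq]
  have hswap : (∑ i : Fin n, ∑ b : Bool, ∑ j : Fin (m + 2),
      ((N₁₇ n m C).c (Sum.inl (i, b, j)) : ℝ) *
        (N₁₇ n m C).trRate y ((m + 4 : ℕ) : ℝ) (Sum.inl (i, b, j)) ξ) =
      ∑ j : Fin (m + 2), ∑ i : Fin n, ∑ b : Bool,
      ((N₁₇ n m C).c (Sum.inl (i, b, j)) : ℝ) *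
        (N₁₇ n m C).trRate y ((m + 4 : ℕ) : ℝ) (Sum.inl (i, b, j)) ξ := by
    exact (Finset.sum_congr rfl fun i _ => Finset.sum_comm).trans Finset.sum_comm
  rw [hswap]
  have hle : ∀ j : Fin (m + 2), (∑ i : Fin n, ∑ b : Bool,
      ((N₁₇ n m C).c (Sum.inl (i, b, j)) : ℝ) *
        (N₁₇ n m C).trRate y ((m + 4 : ℕ) : ℝ) (Sum.inl (i, b, j)) ξ) ≤
      2 * (if (((j:ℕ):ℝ) ≤ ξ ∧ ξ < ((j:ℕ):ℝ) + 1) then (1:ℝ) else 0) := by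
    intro j
    by_cases hW : (((j:ℕ):ℝ) ≤ ξ ∧ ξ < ((j:ℕ):ℝ) + 1)
    · rw [if_pos hW, mul_one]
      have hterm : ∀ i : Fin n, (∑ b : Bool,
          ((N₁₇ n m C).c (Sum.inl (i, b, j)) : ℝ) *
            (N₁₇ n m C).trRate y ((m + 4 : ℕ) : ℝ) (Sum.inl (i, b, j)) ξ) =
          ((N₁₇ n m C).c (Sum.inl (i, α i, j)) : ℝ) := by
        intro i
        have hb : ∀ b : Bool, (N₁₇ n m C).trRate y ((m + 4 : ℕ) : ℝ) (Sum.inl (i, b, j)) ξ =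
            if b = α i then 1 else 0 := by
          intro b
          rw [trRate_inl y hsupp, if_pos hW, hYval]
        rw [Fintype.sum_bool, hb, hb]
        cases hai : α i <;> simp [hai]
      rw [Finset.sum_congr rfl (fun i _ => hterm i)]
      exact cost_col_le_two α hα j
    · have hz : ∀ i : Fin n, (∑ b : Bool,
          ((N₁₇ n m C).c (Sum.inl (i, b, j)) : ℝ) *
            (N₁₇ n m C).trRate y ((m + 4 : ℕ) : ℝ) (Sum.inl (i, b, j)) ξ) = 0 := by
        intro i
        refine Finset.sum_eq_zero fun b _ => ?_
        rw [trRate_inl y hsupp, if_neg hW, mul_zero]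
      rw [Finset.sum_congr rfl (fun i _ => hz i), if_neg hW, mul_zero,
        Finset.sum_const, smul_zero]
  calc (∑ j : Fin (m + 2), ∑ i : Fin n, ∑ b : Bool,
      ((N₁₇ n m C).c (Sum.inl (i, b, j)) : ℝ) *
        (N₁₇ n m C).trRate y ((m + 4 : ℕ) : ℝ) (Sum.inl (i, b, j)) ξ)
      ≤ ∑ j : Fin (m + 2), 2 * (if (((j:ℕ):ℝ) ≤ ξ ∧ ξ < ((j:ℕ):ℝ) + 1) then (1:ℝ) else 0) :=
        Finset.sum_le_sum fun j _ => hle j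
    _ = 2 * ∑ j : Fin (m + 2), (if (((j:ℕ):ℝ) ≤ ξ ∧ ξ < ((j:ℕ):ℝ) + 1) then (1:ℝ) else 0) :=
        by rw [← Finset.mul_sum]
    _ ≤ 2 * 1 := by
        have := window_sum_le_one (m := m) ξ
        linarith
    _ = 2 := by norm_num

lemma FF_ge_three (hsupp : ∀ p, y p ≠ 0 → ∃ i b, p = QP m i b)
    (hy0 : ∀ p, 0 ≤ y p) (α : Fin n → Bool)
    (hC : ∀ j, Function.Injective (C j))
    (hαY : ∀ i, y (QP m i (α i)) = 1) (jc : Fin m)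
    (hbad : ∀ r : Fin 3, α (C jc r).1 ≠ (C jc r).2) (ξ : ℝ)
    (hξ : ((jc:ℕ):ℝ) + 1 ≤ ξ ∧ ξ < ((jc:ℕ):ℝ) + 2) : (3:ℝ) ≤ FF C y ξ := by
  classical
  have hjm : (jc : ℕ) < m := jc.isLt
  set jj : Fin (m + 2) := ⟨(jc : ℕ) + 1, by omega⟩ with hjj
  have hjval : (jj : ℕ) = (jc : ℕ) + 1 := rfl
  have hflip : ∀ r : Fin 3, (C jc r).2 = !(α (C jc r).1) := by
    intro r
    have := hbad r
    cases h1 : α (C jc r).1 <;> cases h2 : (C jc r).2 <;> simp_all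
  have harc : ∀ r : Fin 3, ((N₁₇ n m C).c (Sum.inl ((C jc r).1, α (C jc r).1, jj)) : ℝ) *
      (N₁₇ n m C).trRate y ((m + 4 : ℕ) : ℝ) (Sum.inl ((C jc r).1, α (C jc r).1, jj)) ξ = 1 := by
    intro r
    have hc1 : (N₁₇ n m C).c (Sum.inl ((C jc r).1, α (C jc r).1, jj)) = 1 := by
      rw [N_c_inl, dif_pos (by simp only [hjval]; omega)]
      rw [if_pos]
      refine ⟨r, ?_⟩
      have hfe : (⟨(jj : ℕ) - 1, by omega⟩ : Fin m) = jc := by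
        apply Fin.ext
        show (jj : ℕ) - 1 = (jc : ℕ)
        rw [hjval]
        omega
      rw [hfe, ← hflip r]
    rw [hc1]
    have hrate : (N₁₇ n m C).trRate y ((m + 4 : ℕ) : ℝ) (Sum.inl ((C jc r).1, α (C jc r).1, jj)) ξ
        = 1 := by
      rw [trRate_inl y hsupp, if_pos (by
        simp only [hjval]
        push_cast
        constructor <;> linarith [hξ.1, hξ.2])]
      exact hαY _
    rw [hrate]
    norm_num
  have hinj : ∀ r1 ∈ (Finset.univ : Finset (Fin 3)), ∀ r2 ∈ (Finset.univ : Finset (Fin 3)),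
      (Sum.inl ((C jc r1).1, α (C jc r1).1, jj) : A₁₇ n m) =
        Sum.inl ((C jc r2).1, α (C jc r2).1, jj) → r1 = r2 := by
    intro r1 _ r2 _ h
    simp only [Sum.inl.injEq, Prod.mk.injEq] at h
    apply hC jc
    have h1 := h.1
    rw [Prod.ext_iff]
    exact ⟨h1, by rw [hflip r1, hflip r2, h1]⟩
  have hsum3 : (∑ a ∈ Finset.univ.image
      (fun r : Fin 3 => (Sum.inl ((C jc r).1, α (C jc r).1, jj) : A₁₇ n m)),
      ((N₁₇ n m C).c a : ℝ) * (N₁₇ n m C).trRate y ((m + 4 : ℕ) : ℝ) a ξ) = 3 := by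
    rw [Finset.sum_image hinj]
    rw [Finset.sum_congr rfl (fun r _ => harc r)]
    simp
  have hmono : (∑ a ∈ Finset.univ.image
      (fun r : Fin 3 => (Sum.inl ((C jc r).1, α (C jc r).1, jj) : A₁₇ n m)),
      ((N₁₇ n m C).c a : ℝ) * (N₁₇ n m C).trRate y ((m + 4 : ℕ) : ℝ) a ξ) ≤
      ∑ a : A₁₇ n m, ((N₁₇ n m C).c a : ℝ) * (N₁₇ n m C).trRate y ((m + 4 : ℕ) : ℝ) a ξ := by
    refine Finset.sum_le_sum_of_subset_of_nonneg (Finset.subset_univ _) fun a _ _ => ?_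
    exact mul_nonneg (Nat.cast_nonneg _) (trRate_nonneg y hsupp hy0 a ξ)
  unfold FF
  rw [← hsum3]
  exact hmono

end Combinatorics

end Stmt17

/-- Theorem 3.1: for a 3-SAT instance with `n` variables and `m`
clauses of three pairwise different literals each, the network `N₁₇ n m C` with time
horizon `T = m + 4` admits an integral temporally repeated flow of value at least `n`
with peak cost at most `2` if and only if the instance is satisfiable.  (Hence
deciding integral MPC-TRF is NP-hard, even on two-terminal series-parallel graphs
with unit transit times, unit capacities and arc costs in `{0,1}`.) -/
theorem stmt17 (n m : ℕ) (C : Fin m → Fin 3 → Fin n × Bool)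
    (hC : ∀ j, Function.Injective (C j)) :
    (∃ y : List (A₁₇ n m) → ℝ,
      (N₁₇ n m C).IsDecomposition y ∧ IsIntegral y ∧
      (n : ℝ) ≤ (N₁₇ n m C).trValue y ((m + 4 : ℕ) : ℝ) ∧
      (N₁₇ n m C).trPeakCost y ((m + 4 : ℕ) : ℝ) ≤ 2) ↔
    (∃ α : Fin n → Bool, ∀ j : Fin m, ∃ r : Fin 3, α (C j r).1 = (C j r).2) := by
  classical
  constructor
  · rintro ⟨y, ⟨hy0, hypath, hfin, hcap⟩, hint, hval, hpeak⟩
    have hsupp : ∀ p, y p ≠ 0 → ∃ i b, p = Stmt17.QP m i b :=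
      fun p hp => Stmt17.classify (hypath p hp)
    have hcap' : ∀ i : Fin n, y (Stmt17.QP m i true) + y (Stmt17.QP m i false) ≤ 1 := by
      intro i
      have h := hcap (Sum.inr i)
      rw [Stmt17.staticOf_inr y hsupp] at h
      simpa using h
    have hsum : (n:ℝ) ≤ ∑ ib : Fin n × Bool, y (Stmt17.QP m ib.1 ib.2) := by
      rw [← Stmt17.trValue_eq y hsupp]
      exact hval
    have hpairsum : (∑ ib : Fin n × Bool, y (Stmt17.QP m ib.1 ib.2)) =
        ∑ i : Fin n, (y (Stmt17.QP m i true) + y (Stmt17.QP m i false)) := by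
      rw [Fintype.sum_prod_type]
      exact Finset.sum_congr rfl fun i _ => by rw [Fintype.sum_bool]
    have hpair : ∀ i, y (Stmt17.QP m i true) + y (Stmt17.QP m i false) = 1 := by
      by_contra hne
      push_neg at hne
      obtain ⟨i₀, hi₀⟩ := hne
      have hlt : (∑ i : Fin n, (y (Stmt17.QP m i true) + y (Stmt17.QP m i false))) <
          ∑ _i : Fin n, (1:ℝ) :=
        Finset.sum_lt_sum (fun i _ => hcap' i)
          ⟨i₀, Finset.mem_univ _, lt_of_le_of_ne (hcap' i₀) hi₀⟩
      rw [Finset.sum_const, Finset.card_univ, Fintype.card_fin, nsmul_eq_mul, mul_one] at hlt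
      rw [hpairsum] at hsum
      linarith
    have hαex : ∃ α : Fin n → Bool, ∀ i, y (Stmt17.QP m i (α i)) = 1 := by
      refine ⟨fun i => if y (Stmt17.QP m i true) = 1 then true else false, fun i => ?_⟩
      dsimp only
      by_cases h : y (Stmt17.QP m i true) = 1
      · rw [if_pos h]
        exact h
      · rw [if_neg h]
        obtain ⟨kt, hkt⟩ := hint (Stmt17.QP m i true)
        obtain ⟨kf, hkf⟩ := hint (Stmt17.QP m i false)
        have hk : (kt:ℝ) + (kf:ℝ) = 1 := by rw [← hkt, ← hkf]; exact hpair i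
        have hk' : kt + kf = 1 := by exact_mod_cast hk
        have hkt1 : kt ≠ 1 := fun hh => h (by rw [hkt, hh]; norm_num)
        have hkf1 : kf = 1 := by omega
        rw [hkf, hkf1]
        norm_num
    obtain ⟨α, hαY⟩ := hαex
    refine ⟨α, fun jc => ?_⟩
    by_contra hbad
    push_neg at hbad
    have hbad' : ∀ r : Fin 3, α (C jc r).1 ≠ (C jc r).2 := hbad
    have h3 : (3:ℝ) ≤ (N₁₇ n m C).costAt
        ((N₁₇ n m C).trRate y ((m + 4 : ℕ) : ℝ)) ((((jc:ℕ):ℝ) + 1) + 1) := by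
      refine Stmt17.le_costAt y hsupp (((jc:ℕ):ℝ) + 1) 3 (fun ξ hξ => ?_)
        (Stmt17.FF_nonneg y hsupp hy0)
      obtain ⟨h1, h2⟩ := hξ
      exact Stmt17.FF_ge_three y hsupp hy0 α hC hαY jc hbad' ξ ⟨h1, by linarith⟩
    have hmem : ((((jc:ℕ):ℝ) + 1) + 1) ∈ Set.Ico (0:ℝ) ((m + 4 : ℕ) : ℝ) := by
      constructor
      · positivity
      · have hh : ((jc:ℕ):ℝ) < m := by exact_mod_cast jc.isLt
        push_cast
        linarith
    have h4 := Stmt17.le_trPeakCost (C := C) y hsupp hy0 ((((jc:ℕ):ℝ) + 1) + 1) hmem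
    linarith
  · rintro ⟨α, hα⟩
    set y : List (A₁₇ n m) → ℝ := fun p =>
      (((Finset.univ.filter (fun i : Fin n => p = Stmt17.QP m i (α i))).card : ℕ) : ℝ) with hy
    have hYval : ∀ (i : Fin n) (b : Bool),
        y (Stmt17.QP m i b) = if b = α i then 1 else 0 := by
      intro i b
      by_cases hb : b = α i
      · rw [if_pos hb]
        have hfil : (Finset.univ.filter
            (fun i' : Fin n => Stmt17.QP m i b = Stmt17.QP m i' (α i'))) = {i} := by
          ext i'
          simp only [Finset.mem_filter, Finset.mem_univ, true_and, Finset.mem_singleton]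
          constructor
          · intro h
            have h2 : ((i, b) : Fin n × Bool) = (i', α i') := Stmt17.QP_injective
              (show (fun ib : Fin n × Bool => Stmt17.QP m ib.1 ib.2) (i, b) =
                (fun ib : Fin n × Bool => Stmt17.QP m ib.1 ib.2) (i', α i') from h)
            exact ((Prod.ext_iff.1 h2).1).symm
          · rintro rfl
            rw [hb]
        rw [hy]
        dsimp only
        rw [hfil]
        norm_num
      · rw [if_neg hb]
        have hfil : (Finset.univ.filter
            (fun i' : Fin n => Stmt17.QP m i b = Stmt17.QP m i' (α i'))) = ∅ := by
          ext i'
          simp only [Finset.mem_filter, Finset.mem_univ, true_and, Finset.notMem_empty,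
            iff_false]
          intro h
          have h2 : ((i, b) : Fin n × Bool) = (i', α i') := Stmt17.QP_injective
            (show (fun ib : Fin n × Bool => Stmt17.QP m ib.1 ib.2) (i, b) =
              (fun ib : Fin n × Bool => Stmt17.QP m ib.1 ib.2) (i', α i') from h)
          rw [Prod.mk.injEq] at h2
          obtain ⟨he1, he2⟩ := h2
          apply hb
          rw [he2, ← he1]
        rw [hy]
        dsimp only
        rw [hfil]
        norm_num
    have hsupp : ∀ p, y p ≠ 0 → ∃ i b, p = Stmt17.QP m i b := by
      intro p hp
      have hcard : (Finset.univ.filter fun i : Fin n => p = Stmt17.QP m i (α i)).card ≠ 0 := by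
        intro h0
        apply hp
        rw [hy]
        dsimp only
        rw [h0]
        norm_num
      obtain ⟨i, hi⟩ := Finset.card_ne_zero.1 hcard
      rw [Finset.mem_filter] at hi
      exact ⟨i, α i, hi.2⟩
    have hy0 : ∀ p, 0 ≤ y p := fun p => Nat.cast_nonneg _
    refine ⟨y, ⟨hy0, ?_, ?_, ?_⟩, ?_, ?_, ?_⟩
    · intro p hp
      obtain ⟨i, b, rfl⟩ := hsupp p hp
      exact Stmt17.isSTPath_QP i b
    · refine Set.Finite.subset
        (Set.finite_range (fun ib : Fin n × Bool => Stmt17.QP m ib.1 ib.2)) ?_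
      intro p hp
      obtain ⟨i, b, rfl⟩ := hsupp p hp
      exact ⟨(i, b), rfl⟩
    · intro a
      rcases a with ⟨i, b, j⟩ | i
      · rw [Stmt17.staticOf_inl y hsupp, hYval, Stmt17.N_u]
        split_ifs <;> norm_num
      · rw [Stmt17.staticOf_inr y hsupp, hYval, hYval, Stmt17.N_u]
        cases α i <;> norm_num
    · intro p
      exact ⟨_, rfl⟩
    · rw [Stmt17.trValue_eq y hsupp]
      have hinner : ∀ i : Fin n, (∑ b : Bool, y (Stmt17.QP m i b)) = 1 := by
        intro i
        rw [Fintype.sum_bool, hYval, hYval]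
        cases α i <;> norm_num
      rw [Fintype.sum_prod_type, Finset.sum_congr rfl (fun i _ => hinner i)]
      simp
    · exact Stmt17.trPeakCost_le y hsupp 2 (by norm_num)
        (Stmt17.FF_le_two y α hα hsupp hYval)
end

section
/- Let N be a network over time with unit costs (c_a = 1 for all arcs a) and time horizon T ∈ ℕ. If f is a temporally repeated flow of maximum value with time horizon T that has the earliest arrival property (i.e., for every θ ∈ [0, T], the amount arr_f(θ) of flow arrived at the sink by time θ is maximum among all feasible flows over time with horizon T), then f has minimum peak cost among all temporally repeated flows of maximum value with horizon T. -/
open MeasureTheory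

lemma vol_inter (a b c d : ℝ) :
    volume (Set.Ico c d ∩ Set.Ioc a b) = ENNReal.ofReal (min b d - max a c) := by
  apply le_antisymm
  · calc volume (Set.Ico c d ∩ Set.Ioc a b)
        ≤ volume (Set.Icc (max a c) (min b d)) := by
          apply measure_mono
          rintro x ⟨⟨h1, h2⟩, h3, h4⟩
          exact ⟨max_le (le_of_lt h3) h1, le_min h4 (le_of_lt h2)⟩
      _ = ENNReal.ofReal (min b d - max a c) := Real.volume_Icc
  · calc ENNReal.ofReal (min b d - max a c)
        = volume (Set.Ioo (max a c) (min b d)) := Real.volume_Ioo.symm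
      _ ≤ _ := by
          apply measure_mono
          rintro x ⟨h1, h2⟩
          obtain ⟨ha, hc⟩ := max_lt_iff.mp h1
          obtain ⟨hb, hd⟩ := lt_min_iff.mp h2
          exact ⟨⟨le_of_lt hc, hd⟩, ha, le_of_lt hb⟩

lemma toReal_ofReal_max (z : ℝ) : (ENNReal.ofReal z).toReal = max 0 z := by
  rcases le_total z 0 with h | h
  · simp [ENNReal.ofReal_eq_zero.mpr h, max_eq_left h]
  · rw [ENNReal.toReal_ofReal h, max_eq_right h]

lemma integral_indicator_Ico (a b c d r : ℝ) (hab : a ≤ b) :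
    ∫ ξ in a..b, Set.indicator (Set.Ico c d) (fun _ => r) ξ =
      r * max 0 (min b d - max a c) := by
  rw [intervalIntegral.integral_of_le hab,
    MeasureTheory.integral_indicator_const (μ := volume.restrict (Set.Ioc a b)) r
      measurableSet_Ico,
    measureReal_def, Measure.restrict_apply measurableSet_Ico, vol_inter, toReal_ofReal_max,
    smul_eq_mul, mul_comm]


noncomputable def Mcl (D β x : ℝ) : ℝ := max 0 (min D (β - x))

lemma Mcl_zero (D θ : ℝ) (hD : 0 ≤ D) (h0 : 0 ≤ θ) : Mcl D θ 0 = min D θ := by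
  unfold Mcl
  simp only [Mcl, sub_zero, min_def, max_def]
  split_ifs <;> linarith
namespace Network
variable {V A : Type} [DecidableEq V] [DecidableEq A]

set_option linter.unusedSectionVars false
set_option linter.unusedVariables false

lemma prefixTime_head (N : Network V A) (a : A) (l : List A) :
    N.prefixTime (a :: l) a = 0 := by
  simp [prefixTime, List.takeWhile_cons]

lemma prefixTime_tail (N : Network V A) {a b : A} (l : List A) (hab : a ≠ b) :
    N.prefixTime (a :: l) b = N.τ a + N.prefixTime l b := by
  simp [prefixTime, List.takeWhile_cons, hab]

lemma pre_add_suf (N : Network V A) (p : List A) (a : A) :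
    N.prefixTime p a + N.suffixTime p a = N.pathTime p := by
  rw [prefixTime, suffixTime, pathTime, ← List.sum_append, ← List.map_append,
    List.takeWhile_append_dropWhile]

lemma dropWhile_mem (N : Network V A) {p : List A} {a : A} (h : a ∈ p) :
    ∃ l, p.dropWhile (fun b => b ≠ a) = a :: l := by
  induction p with
  | nil => simp at h
  | cons c l ih =>
    by_cases hca : c = a
    · subst hca; exact ⟨l, by simp [List.dropWhile_cons]⟩
    · rw [List.mem_cons] at h
      rcases h with h | h
      · exact absurd h.symm hca
      · obtain ⟨l', hl'⟩ := ih h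
        refine ⟨l', ?_⟩
        rw [List.dropWhile_cons]
        simp only [decide_not] at hl'
        simp [hca, hl']

lemma tau_le_suffixTime (N : Network V A) {p : List A} {a : A} (h : a ∈ p) :
    N.τ a ≤ N.suffixTime p a := by
  obtain ⟨l, hl⟩ := N.dropWhile_mem h
  rw [suffixTime, hl]
  simp [Nat.le_add_right]

lemma nodup_of_nodes_nodup (N : Network V A) {p : List A}
    (h : (N.nodes p).Nodup) : p.Nodup := by
  cases p with
  | nil => exact List.nodup_nil
  | cons a l =>
    have : ((a :: l).map N.head).Nodup := (List.nodup_cons.mp h).2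
    exact this.of_map N.head

lemma pathTime_cons (N : Network V A) (a : A) (l : List A) :
    N.pathTime (a :: l) = N.τ a + N.pathTime l := by
  simp [pathTime]

lemma sum_tele (N : Network V A) (M : ℝ → ℝ) :
    ∀ (p : List A) (σ : ℝ), p.Nodup →
    (p.map (fun a => M (σ + (N.prefixTime p a : ℝ)) -
      M (σ + (N.prefixTime p a : ℝ) + (N.τ a : ℝ)))).sum
      = M σ - M (σ + (N.pathTime p : ℝ)) := by
  intro p
  induction p with
  | nil => intro σ _; simp [pathTime]
  | cons a l ih =>
    intro σ hnd
    obtain ⟨hal, hndl⟩ := List.nodup_cons.mp hnd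
    rw [List.map_cons, List.sum_cons, N.prefixTime_head a l]
    have hmap : l.map (fun b => M (σ + (N.prefixTime (a :: l) b : ℝ)) -
        M (σ + (N.prefixTime (a :: l) b : ℝ) + (N.τ b : ℝ)))
        = l.map (fun b => M ((σ + (N.τ a : ℝ)) + (N.prefixTime l b : ℝ)) -
        M ((σ + (N.τ a : ℝ)) + (N.prefixTime l b : ℝ) + (N.τ b : ℝ))) := by
      apply List.map_congr_left
      intro b hb
      have hab : a ≠ b := fun h => hal (h ▸ hb)
      rw [N.prefixTime_tail l hab]
      push_cast
      ring_nf
    rw [hmap, ih (σ + (N.τ a : ℝ)) hndl, N.pathTime_cons]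
    push_cast
    ring_nf

lemma node_tele (N : Network V A) (M : ℝ → ℝ) (v : V) :
    ∀ (l : List A) (a : A) (σ : ℝ),
    List.Chain' (fun x b => N.head x = N.tail b) (a :: l) →
    (N.nodes (a :: l)).Nodup →
    ((a :: l).map (fun b => if N.tail b = v then
        M (σ + (N.prefixTime (a :: l) b : ℝ)) else 0)).sum
      - ((a :: l).map (fun b => if N.head b = v then
        M (σ + (N.prefixTime (a :: l) b : ℝ) + (N.τ b : ℝ)) else 0)).sum
      = (if N.tail a = v then M σ else 0)
        - (if N.head ((a :: l).getLast (by simp)) = v then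
            M (σ + (N.pathTime (a :: l) : ℝ)) else 0) := by
  intro l
  induction l with
  | nil =>
    intro a σ _ _
    simp [N.prefixTime_head, pathTime]
  | cons c l' ih =>
    intro a σ hch hnd
    have hac : N.head a = N.tail c := (List.isChain_cons_cons.mp hch).1
    have hnd2 : (N.nodes (c :: l')).Nodup := by
      have h1 : N.nodes (a :: c :: l') = N.tail a :: N.head a :: (c :: l').map N.head := by
        simp [nodes]
      have h2 : (N.head a :: (c :: l').map N.head).Nodup := by
        rw [h1] at hnd; exact (List.nodup_cons.mp hnd).2
      rw [show N.nodes (c :: l') = N.tail c :: (c :: l').map N.head by simp [nodes], ← hac]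
      exact h2
    have hndarcs : (a :: c :: l').Nodup := N.nodup_of_nodes_nodup hnd
    have hal : a ∉ c :: l' := (List.nodup_cons.mp hndarcs).1
    have hpre : ∀ b ∈ c :: l', (N.prefixTime (a :: c :: l') b : ℝ)
        = (N.τ a : ℝ) + (N.prefixTime (c :: l') b : ℝ) := by
      intro b hb
      have hab : a ≠ b := fun h => hal (h ▸ hb)
      rw [N.prefixTime_tail _ hab]
      push_cast; ring
    rw [List.map_cons, List.map_cons (f := fun b => if N.head b = v then
        M (σ + (N.prefixTime (a :: c :: l') b : ℝ) + (N.τ b : ℝ)) else 0),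
      List.sum_cons, List.sum_cons, N.prefixTime_head]
    have hm1 : (c :: l').map (fun b => if N.tail b = v then
        M (σ + (N.prefixTime (a :: c :: l') b : ℝ)) else 0)
        = (c :: l').map (fun b => if N.tail b = v then
        M ((σ + (N.τ a : ℝ)) + (N.prefixTime (c :: l') b : ℝ)) else 0) := by
      apply List.map_congr_left
      intro b hb
      rw [hpre b hb, ← add_assoc]
    have hm2 : (c :: l').map (fun b => if N.head b = v then
        M (σ + (N.prefixTime (a :: c :: l') b : ℝ) + (N.τ b : ℝ)) else 0)
        = (c :: l').map (fun b => if N.head b = v then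
        M ((σ + (N.τ a : ℝ)) + (N.prefixTime (c :: l') b : ℝ) + (N.τ b : ℝ)) else 0) := by
      apply List.map_congr_left
      intro b hb
      rw [hpre b hb, ← add_assoc]
    rw [hm1, hm2]
    have hgl : (a :: c :: l').getLast (by simp) = (c :: l').getLast (by simp) := by
      simp [List.getLast]
    have := ih c (σ + (N.τ a : ℝ)) (List.isChain_cons_cons.mp hch).2 hnd2
    rw [hgl, N.pathTime_cons]
    push_cast
    rw [show σ + ((N.τ a : ℝ) + (N.pathTime (c :: l') : ℝ))
        = (σ + (N.τ a : ℝ)) + (N.pathTime (c :: l') : ℝ) by ring]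
    rw [← hac] at this
    simp only [Nat.cast_zero, add_zero] at *
    rcases eq_or_ne (N.head a) v with hv | hv <;>
      simp only [hv, if_pos, if_neg, ite_true, ite_false] at * <;> linarith

end Network
namespace Network
variable {V A : Type} [DecidableEq V] [DecidableEq A]

set_option linter.unusedSectionVars false

lemma finsum_mem_helper (f : List A → ℝ) (s : Finset (List A))
    (hf : Function.support f ⊆ ↑s) (S : Set (List A)) :
    ∑ᶠ p ∈ S, f p = ∑ p ∈ s, Set.indicator S f p := by
  rw [finsum_mem_def]
  refine finsum_eq_sum_of_support_subset _ (le_trans ?_ hf)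
  intro x hx
  rw [Function.mem_support] at hx ⊢
  intro h
  exact hx (by simp [Set.indicator_apply, h])

variable [Fintype A]

/-- the condition for a path to contribute to arc `a`. -/
def Cnd (N : Network V A) (T : ℝ) (p : List A) (a : A) : Prop :=
  N.IsSTPath p ∧ (N.pathTime p : ℝ) ≤ T ∧ a ∈ p

open scoped Classical in
lemma trRate_repr (N : Network V A) {y : List A → ℝ} (hy : N.IsDecomposition y)
    (T : ℝ) (a : A) (θ : ℝ) :
    N.trRate y T a θ = ∑ p ∈ hy.2.2.1.toFinset,
      (if N.Cnd T p a then
        Set.indicator (Set.Ico ((N.prefixTime p a : ℝ)) (T - (N.suffixTime p a : ℝ)))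
          (fun _ => y p) θ else 0) := by
  rw [trRate, finsum_mem_helper y hy.2.2.1.toFinset (by simp)]
  apply Finset.sum_congr rfl
  intro p _
  rw [Set.indicator_apply]
  by_cases hC : N.Cnd T p a
  · rw [if_pos hC, Set.indicator_apply]
    by_cases hm : θ ∈ Set.Ico ((N.prefixTime p a : ℝ)) (T - (N.suffixTime p a : ℝ))
    · rw [if_pos hm, if_pos]
      obtain ⟨hm1, hm2⟩ := hm
      exact ⟨hC.1, hC.2.1, hC.2.2, hm1, by linarith [hm2]⟩
    · rw [if_neg hm, if_neg]
      intro hmem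
      exact hm ⟨hmem.2.2.2.1, by linarith [hmem.2.2.2.2]⟩
  · rw [if_neg hC, if_neg]
    intro hmem
    exact hC ⟨hmem.1, hmem.2.1, hmem.2.2.1⟩

open scoped Classical in
lemma trRate_measurable (N : Network V A) {y : List A → ℝ} (hy : N.IsDecomposition y)
    (T : ℝ) (a : A) : Measurable (N.trRate y T a) := by
  have : N.trRate y T a = fun θ => ∑ p ∈ hy.2.2.1.toFinset,
      (if N.Cnd T p a then
        Set.indicator (Set.Ico ((N.prefixTime p a : ℝ)) (T - (N.suffixTime p a : ℝ)))
          (fun _ => y p) θ else 0) := funext (N.trRate_repr hy T a)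
  rw [this]
  apply Finset.measurable_sum
  intro p _
  by_cases hC : N.Cnd T p a
  · simp only [if_pos hC]
    exact Measurable.indicator measurable_const measurableSet_Ico
  · simp only [if_neg hC]
    exact measurable_const

lemma trRate_nonneg (N : Network V A) {y : List A → ℝ} (hy : N.IsDecomposition y)
    (T : ℝ) (a : A) (θ : ℝ) : 0 ≤ N.trRate y T a θ := by
  classical
  rw [N.trRate_repr hy T a θ]
  apply Finset.sum_nonneg
  intro p _
  split_ifs
  · exact Set.indicator_nonneg (fun _ _ => hy.1 p) θ
  · exact le_refl 0

lemma trRate_intervalIntegrable (N : Network V A) {y : List A → ℝ}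
    (hy : N.IsDecomposition y) (T : ℝ) (a : A) (α β : ℝ) :
    IntervalIntegrable (N.trRate y T a) MeasureTheory.volume α β := by
  classical
  have : N.trRate y T a = ∑ p ∈ hy.2.2.1.toFinset, (fun θ =>
      if N.Cnd T p a then
        Set.indicator (Set.Ico ((N.prefixTime p a : ℝ)) (T - (N.suffixTime p a : ℝ)))
          (fun _ => y p) θ else 0) := by
    funext θ
    rw [N.trRate_repr hy T a θ, Finset.sum_apply]
  rw [this]
  apply IntervalIntegrable.sum
  intro p _
  by_cases hC : N.Cnd T p a
  · simp only [if_pos hC]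
    apply MeasureTheory.Integrable.intervalIntegrable
    rw [MeasureTheory.integrable_indicator_iff measurableSet_Ico]
    exact MeasureTheory.integrableOn_const measure_Ico_lt_top.ne
  · simp only [if_neg hC]
    exact intervalIntegrable_const

lemma presuf_cast (N : Network V A) (p : List A) (a : A) :
    (N.prefixTime p a : ℝ) + (N.suffixTime p a : ℝ) = (N.pathTime p : ℝ) := by
  rw [← Nat.cast_add, N.pre_add_suf]

open scoped Classical in
lemma int_from_zero (N : Network V A) {y : List A → ℝ} (hy : N.IsDecomposition y)
    (T : ℝ) (a : A) (β : ℝ) :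
    ∫ ξ in (0:ℝ)..β, N.trRate y T a ξ = ∑ p ∈ hy.2.2.1.toFinset,
      (if N.Cnd T p a then
        y p * Mcl (T - (N.pathTime p : ℝ)) β ((N.prefixTime p a : ℝ)) else 0) := by
  have hrepr : ∀ θ, N.trRate y T a θ = ∑ p ∈ hy.2.2.1.toFinset, (fun (p : List A) (θ : ℝ) =>
      if N.Cnd T p a then
        Set.indicator (Set.Ico ((N.prefixTime p a : ℝ)) (T - (N.suffixTime p a : ℝ)))
          (fun _ => y p) θ else 0) p θ := fun θ => N.trRate_repr hy T a θ
  rw [intervalIntegral.integral_congr (g := fun θ => ∑ p ∈ hy.2.2.1.toFinset,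
      (fun (p : List A) (θ : ℝ) =>
      if N.Cnd T p a then
        Set.indicator (Set.Ico ((N.prefixTime p a : ℝ)) (T - (N.suffixTime p a : ℝ)))
          (fun _ => y p) θ else 0) p θ) (fun θ _ => hrepr θ),
    intervalIntegral.integral_finset_sum]
  swap
  · intro p _
    by_cases hC : N.Cnd T p a
    · simp only [if_pos hC]
      apply MeasureTheory.Integrable.intervalIntegrable
      rw [MeasureTheory.integrable_indicator_iff measurableSet_Ico]
      exact MeasureTheory.integrableOn_const measure_Ico_lt_top.ne
    · simp only [if_neg hC]
      exact intervalIntegrable_const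
  apply Finset.sum_congr rfl
  intro p _
  by_cases hC : N.Cnd T p a
  · simp only [if_pos hC]
    have hps := N.presuf_cast p a
    set c := (N.prefixTime p a : ℝ) with hc
    set D := T - (N.pathTime p : ℝ) with hD
    have hd : T - (N.suffixTime p a : ℝ) = c + D := by rw [hD]; linarith
    have hc0 : 0 ≤ c := Nat.cast_nonneg _
    rcases le_total 0 β with hβ | hβ
    · rw [integral_indicator_Ico 0 β c (T - (N.suffixTime p a : ℝ)) (y p) hβ, hd]
      congr 1
      rw [Mcl]
      congr 1
      rw [max_eq_right hc0]
      rcases le_total β (c + D) with h | h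
      · rw [min_eq_left h, min_eq_right (by linarith : β - c ≤ D)]
      · rw [min_eq_right h, min_eq_left (by linarith : D ≤ β - c)]; ring
    · rw [intervalIntegral.integral_symm,
        integral_indicator_Ico β 0 c (T - (N.suffixTime p a : ℝ)) (y p) hβ]
      have h1 : max 0 (min 0 (T - (N.suffixTime p a : ℝ)) - max β c) = 0 := by
        apply max_eq_left
        have e1 : max β c = c := max_eq_right (le_trans hβ hc0)
        rw [e1]
        have e2 : min 0 (T - (N.suffixTime p a : ℝ)) ≤ 0 := min_le_left _ _
        linarith
      have h2 : Mcl D β c = 0 := by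
        rw [Mcl]
        apply max_eq_left
        have : min D (β - c) ≤ β - c := min_le_right _ _
        linarith
      rw [h1, h2]
      simp
  · simp only [if_neg hC, intervalIntegral.integral_zero]

end Network
namespace Network
variable {V A : Type} [DecidableEq V] [DecidableEq A] [Fintype A]

set_option linter.unusedSectionVars false
set_option linter.unusedVariables false

lemma st_ne {N : Network V A} {p : List A} (h : N.IsSTPath p) : N.s ≠ N.t := by
  obtain ⟨hne, hch, hhd, hlst, hnd⟩ := h
  cases p with
  | nil => exact absurd rfl hne
  | cons a l =>
    have hs : N.tail a = N.s := hhd a rfl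
    have ht : N.head ((a :: l).getLast (by simp)) = N.t := by
      apply hlst
      rw [List.getLast?_eq_getLast (l := a :: l) (by simp)]
      rfl
    have hnodes : N.nodes (a :: l) = N.tail a :: (a :: l).map N.head := rfl
    rw [hnodes] at hnd
    obtain ⟨hnotin, _⟩ := List.nodup_cons.mp hnd
    intro hst
    apply hnotin
    rw [hs, hst, ← ht]
    exact List.mem_map_of_mem (f := N.head) (List.getLast_mem _)

open scoped Classical in
lemma outflow_repr (N : Network V A) {y : List A → ℝ} (hy : N.IsDecomposition y)
    (T : ℝ) (v : V) (θ : ℝ) :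
    N.outflowBy (N.trRate y T) v θ = ∑ p ∈ hy.2.2.1.toFinset,
      (if N.IsSTPath p ∧ (N.pathTime p : ℝ) ≤ T then
        (p.map (fun b => if N.tail b = v then
          y p * Mcl (T - (N.pathTime p : ℝ)) θ ((N.prefixTime p b : ℝ)) else 0)).sum
        else 0) := by
  rw [outflowBy]
  rw [Finset.sum_congr rfl (fun a _ => N.int_from_zero hy T a θ)]
  rw [Finset.sum_filter]
  have hpush : ∀ a : A, (if N.tail a = v then (∑ p ∈ hy.2.2.1.toFinset,
      if N.Cnd T p a then y p * Mcl (T - (N.pathTime p : ℝ)) θ ((N.prefixTime p a : ℝ)) else 0) else 0)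
      = ∑ p ∈ hy.2.2.1.toFinset, (if N.tail a = v then
      (if N.Cnd T p a then y p * Mcl (T - (N.pathTime p : ℝ)) θ ((N.prefixTime p a : ℝ)) else 0) else 0) := by
    intro a
    split_ifs with h
    · rfl
    · rw [Finset.sum_const_zero]
  rw [Finset.sum_congr rfl (fun a _ => hpush a)]
  rw [Finset.sum_comm]
  apply Finset.sum_congr rfl
  intro p _
  by_cases hQ : N.IsSTPath p ∧ (N.pathTime p : ℝ) ≤ T
  · rw [if_pos hQ]
    have hstep : ∀ a : A, (if N.tail a = v then
        (if N.Cnd T p a then y p * Mcl (T - (N.pathTime p : ℝ)) θ ((N.prefixTime p a : ℝ)) else 0) else 0)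
        = (if a ∈ p then (if N.tail a = v then
          y p * Mcl (T - (N.pathTime p : ℝ)) θ ((N.prefixTime p a : ℝ)) else 0) else 0) := by
      intro a
      by_cases h1 : a ∈ p <;> by_cases h2 : N.tail a = v <;>
        simp [h1, h2, Cnd, hQ.1, hQ.2]
    rw [Finset.sum_congr rfl (fun a _ => hstep a)]
    have hnd : p.Nodup := N.nodup_of_nodes_nodup hQ.1.2.2.2.2
    have hmem : ∀ a : A, (if a ∈ p then (if N.tail a = v then
        y p * Mcl (T - (N.pathTime p : ℝ)) θ ((N.prefixTime p a : ℝ)) else 0) else 0)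
        = (if a ∈ p.toFinset then (if N.tail a = v then
        y p * Mcl (T - (N.pathTime p : ℝ)) θ ((N.prefixTime p a : ℝ)) else 0) else 0) := by
      intro a; simp
    rw [Finset.sum_congr rfl (fun a _ => hmem a), Finset.sum_ite_mem,
      Finset.univ_inter, List.sum_toFinset _ hnd]
  · rw [if_neg hQ]
    apply Finset.sum_eq_zero
    intro a _
    have : ¬ N.Cnd T p a := fun h => hQ ⟨h.1, h.2.1⟩
    simp [this]

lemma Mcl_shift (D θ t x : ℝ) : Mcl D (θ - t) x = Mcl D θ (x + t) := by
  unfold Mcl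
  ring_nf

open scoped Classical in
lemma inflow_repr (N : Network V A) {y : List A → ℝ} (hy : N.IsDecomposition y)
    (T : ℝ) (v : V) (θ : ℝ) :
    N.inflowBy (N.trRate y T) v θ = ∑ p ∈ hy.2.2.1.toFinset,
      (if N.IsSTPath p ∧ (N.pathTime p : ℝ) ≤ T then
        (p.map (fun b => if N.head b = v then
          y p * Mcl (T - (N.pathTime p : ℝ)) θ ((N.prefixTime p b : ℝ) + (N.τ b : ℝ)) else 0)).sum
        else 0) := by
  rw [inflowBy]
  rw [Finset.sum_congr rfl (fun a _ => N.int_from_zero hy T a (θ - (N.τ a : ℝ)))]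
  rw [Finset.sum_filter]
  have hpush : ∀ a : A, (if N.head a = v then (∑ p ∈ hy.2.2.1.toFinset,
      if N.Cnd T p a then y p * Mcl (T - (N.pathTime p : ℝ)) (θ - (N.τ a : ℝ)) ((N.prefixTime p a : ℝ)) else 0) else 0)
      = ∑ p ∈ hy.2.2.1.toFinset, (if N.head a = v then
      (if N.Cnd T p a then y p * Mcl (T - (N.pathTime p : ℝ)) θ ((N.prefixTime p a : ℝ) + (N.τ a : ℝ)) else 0) else 0) := by
    intro a
    simp only [Mcl_shift]
    split_ifs with h
    · rfl
    · rw [Finset.sum_const_zero]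
  rw [Finset.sum_congr rfl (fun a _ => hpush a)]
  rw [Finset.sum_comm]
  apply Finset.sum_congr rfl
  intro p _
  by_cases hQ : N.IsSTPath p ∧ (N.pathTime p : ℝ) ≤ T
  · rw [if_pos hQ]
    have hstep : ∀ a : A, (if N.head a = v then
        (if N.Cnd T p a then y p * Mcl (T - (N.pathTime p : ℝ)) θ ((N.prefixTime p a : ℝ) + (N.τ a : ℝ)) else 0) else 0)
        = (if a ∈ p.toFinset then (if N.head a = v then
          y p * Mcl (T - (N.pathTime p : ℝ)) θ ((N.prefixTime p a : ℝ) + (N.τ a : ℝ)) else 0) else 0) := by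
      intro a
      by_cases h1 : a ∈ p <;> by_cases h2 : N.head a = v <;>
        simp [h1, h2, Cnd, hQ.1, hQ.2]
    have hnd : p.Nodup := N.nodup_of_nodes_nodup hQ.1.2.2.2.2
    rw [Finset.sum_congr rfl (fun a _ => hstep a), Finset.sum_ite_mem,
      Finset.univ_inter, List.sum_toFinset _ hnd]
  · rw [if_neg hQ]
    apply Finset.sum_eq_zero
    intro a _
    have : ¬ N.Cnd T p a := fun h => hQ ⟨h.1, h.2.1⟩
    simp [this]

open scoped Classical in
lemma flowdiff (N : Network V A) {y : List A → ℝ} (hy : N.IsDecomposition y)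
    (T : ℝ) (v : V) (θ : ℝ) :
    N.outflowBy (N.trRate y T) v θ - N.inflowBy (N.trRate y T) v θ
      = ∑ p ∈ hy.2.2.1.toFinset,
      (if N.IsSTPath p ∧ (N.pathTime p : ℝ) ≤ T then
        ((if N.s = v then y p * Mcl (T - (N.pathTime p : ℝ)) θ 0 else 0)
          - (if N.t = v then y p * Mcl (T - (N.pathTime p : ℝ)) θ ((N.pathTime p : ℝ)) else 0))
        else 0) := by
  rw [N.outflow_repr hy T v θ, N.inflow_repr hy T v θ, ← Finset.sum_sub_distrib]
  apply Finset.sum_congr rfl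
  intro p _
  by_cases hQ : N.IsSTPath p ∧ (N.pathTime p : ℝ) ≤ T
  · rw [if_pos hQ, if_pos hQ, if_pos hQ]
    obtain ⟨hne, hch, hhd, hlst, hnd⟩ := hQ.1
    cases p with
    | nil => exact absurd rfl hne
    | cons a l =>
      have h := N.node_tele (fun x => y (a :: l) * Mcl (T - (N.pathTime (a :: l) : ℝ)) θ x) v l a 0 hch hnd
      simp only [zero_add] at h
      have hs : N.tail a = N.s := hhd a rfl
      have ht : N.head ((a :: l).getLast (by simp)) = N.t := by
        apply hlst
        rw [List.getLast?_eq_getLast (l := a :: l) (by simp)]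
        rfl
      rw [hs, ht] at h
      exact h
  · rw [if_neg hQ, if_neg hQ, if_neg hQ, sub_zero]

open scoped Classical in
lemma conservation (N : Network V A) {y : List A → ℝ} (hy : N.IsDecomposition y)
    (T : ℝ) (v : V) (hvs : v ≠ N.s) (hvt : v ≠ N.t) (θ : ℝ) :
    N.outflowBy (N.trRate y T) v θ = N.inflowBy (N.trRate y T) v θ := by
  have h := N.flowdiff hy T v θ
  rw [Finset.sum_eq_zero] at h
  · linarith
  · intro p _
    by_cases h1 : N.IsSTPath p ∧ (N.pathTime p : ℝ) ≤ T
    · rw [if_pos h1, if_neg (fun h : N.s = v => hvs h.symm),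
        if_neg (fun h : N.t = v => hvt h.symm)]
      ring
    · rw [if_neg h1]

open scoped Classical in
lemma arrived_repr (N : Network V A) {y : List A → ℝ} (hy : N.IsDecomposition y)
    (T : ℝ) (θ : ℝ) :
    N.arrivedBy (N.trRate y T) θ = ∑ p ∈ hy.2.2.1.toFinset,
      (if N.IsSTPath p ∧ (N.pathTime p : ℝ) ≤ T then
        y p * Mcl (T - (N.pathTime p : ℝ)) θ ((N.pathTime p : ℝ)) else 0) := by
  have h := N.flowdiff hy T N.t θ
  rw [arrivedBy, show N.inflowBy (N.trRate y T) N.t θ - N.outflowBy (N.trRate y T) N.t θ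
    = -(N.outflowBy (N.trRate y T) N.t θ - N.inflowBy (N.trRate y T) N.t θ) by ring, h,
    ← Finset.sum_neg_distrib]
  apply Finset.sum_congr rfl
  intro p _
  by_cases h1 : N.IsSTPath p ∧ (N.pathTime p : ℝ) ≤ T
  · rw [if_pos h1, if_pos h1, if_neg (st_ne h1.1), if_pos rfl]
    ring
  · rw [if_neg h1, if_neg h1, neg_zero]

end Network
namespace Network
variable {V A : Type} [DecidableEq V] [DecidableEq A] [Fintype A]

set_option linter.unusedSectionVars false
set_option linter.unusedVariables false

open scoped Classical in
lemma arrTR_repr (N : Network V A) {y : List A → ℝ} (hy : N.IsDecomposition y)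
    (θ : ℝ) :
    N.arrTR y θ = ∑ p ∈ hy.2.2.1.toFinset,
      (if N.IsSTPath p ∧ (N.pathTime p : ℝ) ≤ θ then y p * (θ - (N.pathTime p : ℝ)) else 0) := by
  rw [arrTR, finsum_mem_helper (fun p => y p * (θ - (N.pathTime p : ℝ))) hy.2.2.1.toFinset
    (by intro x hx
        rw [Function.mem_support] at hx
        have : y x ≠ 0 := fun h => hx (by rw [h, zero_mul])
        simpa using this)]
  apply Finset.sum_congr rfl
  intro p _
  rw [Set.indicator_apply]
  rfl

open scoped Classical in
lemma trValue_repr (N : Network V A) {y : List A → ℝ} (hy : N.IsDecomposition y)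
    (T : ℝ) :
    N.trValue y T = ∑ p ∈ hy.2.2.1.toFinset,
      (if N.IsSTPath p ∧ (N.pathTime p : ℝ) ≤ T then y p * (T - (N.pathTime p : ℝ)) else 0) := by
  rw [trValue, finsum_mem_helper (fun p => y p * (T - (N.pathTime p : ℝ))) hy.2.2.1.toFinset
    (by intro x hx
        rw [Function.mem_support] at hx
        have : y x ≠ 0 := fun h => hx (by rw [h, zero_mul])
        simpa using this)]
  apply Finset.sum_congr rfl
  intro p _
  rw [Set.indicator_apply]
  rfl

open scoped Classical in
lemma arrived_eq_arrTR (N : Network V A) {y : List A → ℝ} (hy : N.IsDecomposition y)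
    (T : ℝ) {θ : ℝ} (h0 : 0 ≤ θ) (hθT : θ ≤ T) :
    N.arrivedBy (N.trRate y T) θ = N.arrTR y θ := by
  rw [N.arrived_repr hy T θ, N.arrTR_repr hy θ]
  apply Finset.sum_congr rfl
  intro p hp
  have hyp : y p ≠ 0 := by
    have := (Set.Finite.mem_toFinset hy.2.2.1).mp hp
    exact this
  have hST : N.IsSTPath p := hy.2.1 p hyp
  have hτ0 : (0:ℝ) ≤ (N.pathTime p : ℝ) := Nat.cast_nonneg _
  by_cases h1 : (N.pathTime p : ℝ) ≤ θ
  · rw [if_pos ⟨hST, le_trans h1 hθT⟩, if_pos ⟨hST, h1⟩]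
    congr 1
    rw [Mcl, min_eq_right (by linarith), max_eq_right (by linarith)]
  · have hMcl : Mcl (T - (N.pathTime p : ℝ)) θ ((N.pathTime p : ℝ)) = 0 := by
      rw [Mcl]
      apply max_eq_left
      have : min (T - (N.pathTime p : ℝ)) (θ - (N.pathTime p : ℝ)) ≤ θ - (N.pathTime p : ℝ) :=
        min_le_right _ _
      linarith [not_le.mp h1]
    by_cases h2 : (N.pathTime p : ℝ) ≤ T
    · rw [if_pos ⟨hST, h2⟩,
        if_neg (fun h : N.IsSTPath p ∧ (N.pathTime p : ℝ) ≤ θ => h1 h.2), hMcl, mul_zero]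
    · rw [if_neg (fun h : N.IsSTPath p ∧ (N.pathTime p : ℝ) ≤ T => h2 h.2),
        if_neg (fun h : N.IsSTPath p ∧ (N.pathTime p : ℝ) ≤ θ => h1 h.2)]

open scoped Classical in
lemma staticOf_repr (N : Network V A) {y : List A → ℝ} (hy : N.IsDecomposition y)
    (a : A) :
    N.staticOf y a = ∑ p ∈ hy.2.2.1.toFinset, (if a ∈ p then y p else 0) := by
  rw [staticOf, finsum_mem_helper y hy.2.2.1.toFinset (by simp)]
  apply Finset.sum_congr rfl
  intro p _
  rw [Set.indicator_apply]
  rfl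

open scoped Classical in
lemma trRate_le_u (N : Network V A) {y : List A → ℝ} (hy : N.IsDecomposition y)
    (T : ℝ) (a : A) (θ : ℝ) : N.trRate y T a θ ≤ (N.u a : ℝ) := by
  refine le_trans ?_ (hy.2.2.2 a)
  rw [N.trRate_repr hy T a θ, N.staticOf_repr hy a]
  apply Finset.sum_le_sum
  intro p _
  by_cases h1 : N.Cnd T p a
  · rw [if_pos h1, if_pos h1.2.2]
    exact le_trans (Set.indicator_le_self' (fun _ _ => hy.1 p) θ) (le_refl _)
  · rw [if_neg h1]
    split_ifs
    · exact hy.1 p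
    · exact le_refl 0

open scoped Classical in
lemma trRate_zero_late (N : Network V A) {y : List A → ℝ} (hy : N.IsDecomposition y)
    (T : ℝ) (a : A) (θ : ℝ) (h : T - (N.τ a : ℝ) < θ) : N.trRate y T a θ = 0 := by
  rw [N.trRate_repr hy T a θ]
  apply Finset.sum_eq_zero
  intro p _
  by_cases h1 : N.Cnd T p a
  · rw [if_pos h1]
    apply Set.indicator_of_notMem
    intro hmem
    have hsuf : (N.τ a : ℝ) ≤ (N.suffixTime p a : ℝ) :=
      Nat.cast_le.mpr (N.tau_le_suffixTime h1.2.2)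
    have := hmem.2
    linarith
  · rw [if_neg h1]

open scoped Classical in
lemma trRate_zero_neg (N : Network V A) {y : List A → ℝ} (hy : N.IsDecomposition y)
    (T : ℝ) (a : A) (θ : ℝ) (h : θ < 0) : N.trRate y T a θ = 0 := by
  rw [N.trRate_repr hy T a θ]
  apply Finset.sum_eq_zero
  intro p _
  by_cases h1 : N.Cnd T p a
  · rw [if_pos h1]
    apply Set.indicator_of_notMem
    intro hmem
    have : (0:ℝ) ≤ (N.prefixTime p a : ℝ) := Nat.cast_nonneg _
    linarith [hmem.1]
  · rw [if_neg h1]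

lemma trFOT (N : Network V A) {y : List A → ℝ} (hy : N.IsDecomposition y)
    (T : ℝ) : N.IsFlowOverTime T (N.trRate y T) := by
  refine ⟨fun a => N.trRate_measurable hy T a, fun a θ => N.trRate_nonneg hy T a θ,
    fun a θ => N.trRate_le_u hy T a θ, fun a θ h => N.trRate_zero_late hy T a θ h,
    fun a θ h => N.trRate_zero_neg hy T a θ h, ?_⟩
  intro v hvs hvt θ _
  exact le_of_eq (N.conservation hy T v hvs hvt θ)

end Network
namespace Network
variable {V A : Type} [DecidableEq V] [DecidableEq A] [Fintype A]

set_option linter.unusedSectionVars false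
set_option linter.unusedVariables false

open scoped Classical in
lemma costAt_eq (N : Network V A) {y : List A → ℝ} (hy : N.IsDecomposition y)
    (hc : ∀ a, N.c a = 1) (T θ : ℝ) :
    N.costAt (N.trRate y T) θ = ∑ p ∈ hy.2.2.1.toFinset,
      (if N.IsSTPath p ∧ (N.pathTime p : ℝ) ≤ T then
        y p * Mcl (T - (N.pathTime p : ℝ)) θ 0
          - y p * Mcl (T - (N.pathTime p : ℝ)) θ ((N.pathTime p : ℝ)) else 0) := by
  rw [costAt]
  have step1 : ∀ a : A, (N.c a : ℝ) * ∫ ξ in (θ - (N.τ a : ℝ))..θ, N.trRate y T a ξ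
      = ∑ p ∈ hy.2.2.1.toFinset, (if N.Cnd T p a then
          y p * Mcl (T - (N.pathTime p : ℝ)) θ ((N.prefixTime p a : ℝ))
          - y p * Mcl (T - (N.pathTime p : ℝ)) θ ((N.prefixTime p a : ℝ) + (N.τ a : ℝ)) else 0) := by
    intro a
    rw [hc a, Nat.cast_one, one_mul,
      ← intervalIntegral.integral_interval_sub_left
        (N.trRate_intervalIntegrable hy T a 0 θ)
        (N.trRate_intervalIntegrable hy T a 0 (θ - (N.τ a : ℝ))),
      N.int_from_zero hy T a θ, N.int_from_zero hy T a (θ - (N.τ a : ℝ)),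
      ← Finset.sum_sub_distrib]
    apply Finset.sum_congr rfl
    intro p _
    split_ifs with h1
    · rw [Mcl_shift]
    · rw [sub_zero]
  rw [Finset.sum_congr rfl (fun a _ => step1 a), Finset.sum_comm]
  apply Finset.sum_congr rfl
  intro p _
  by_cases hQ : N.IsSTPath p ∧ (N.pathTime p : ℝ) ≤ T
  · rw [if_pos hQ]
    have hnd : p.Nodup := N.nodup_of_nodes_nodup hQ.1.2.2.2.2
    have hstep : ∀ a : A, (if N.Cnd T p a then
        y p * Mcl (T - (N.pathTime p : ℝ)) θ ((N.prefixTime p a : ℝ))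
          - y p * Mcl (T - (N.pathTime p : ℝ)) θ ((N.prefixTime p a : ℝ) + (N.τ a : ℝ)) else 0)
        = (if a ∈ p.toFinset then
        y p * Mcl (T - (N.pathTime p : ℝ)) θ ((N.prefixTime p a : ℝ))
          - y p * Mcl (T - (N.pathTime p : ℝ)) θ ((N.prefixTime p a : ℝ) + (N.τ a : ℝ)) else 0) := by
      intro a
      by_cases h1 : a ∈ p <;> simp [h1, Cnd, hQ.1, hQ.2]
    rw [Finset.sum_congr rfl (fun a _ => hstep a), Finset.sum_ite_mem,
      Finset.univ_inter, List.sum_toFinset _ hnd]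
    have h := N.sum_tele (fun x => y p * Mcl (T - (N.pathTime p : ℝ)) θ x) p 0 hnd
    simp only [zero_add] at h
    rw [h]
  · rw [if_neg hQ]
    apply Finset.sum_eq_zero
    intro a _
    rw [if_neg (fun h : N.Cnd T p a => hQ ⟨h.1, h.2.1⟩)]

open scoped Classical in
lemma costAt_formula (N : Network V A) {y : List A → ℝ} (hy : N.IsDecomposition y)
    (hc : ∀ a, N.c a = 1) (T : ℝ) {θ : ℝ} (h0 : 0 ≤ θ) (hθT : θ ≤ T) :
    N.costAt (N.trRate y T) θ
      = N.trValue y T - N.arrTR y (T - θ) - N.arrTR y θ := by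
  rw [N.costAt_eq hy hc T θ, N.trValue_repr hy T, N.arrTR_repr hy (T - θ),
    N.arrTR_repr hy θ, ← Finset.sum_sub_distrib, ← Finset.sum_sub_distrib]
  apply Finset.sum_congr rfl
  intro p hp
  have hyp : y p ≠ 0 := (Set.Finite.mem_toFinset hy.2.2.1).mp hp
  have hST : N.IsSTPath p := hy.2.1 p hyp
  set τ := (N.pathTime p : ℝ) with hτ
  have hτ0 : (0:ℝ) ≤ τ := Nat.cast_nonneg _
  by_cases h1 : τ ≤ T
  · rw [if_pos ⟨hST, h1⟩, if_pos ⟨hST, h1⟩]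
    have e0 : Mcl (T - τ) θ 0 = min (T - τ) θ := Mcl_zero _ _ (by linarith) h0
    by_cases h3 : τ ≤ θ
    · have e1 : Mcl (T - τ) θ τ = θ - τ := by
        rw [Mcl, min_eq_right (by linarith), max_eq_right (by linarith)]
      rw [if_pos (show N.IsSTPath p ∧ τ ≤ θ from ⟨hST, h3⟩), e0, e1]
      by_cases h2 : τ ≤ T - θ
      · rw [if_pos (show N.IsSTPath p ∧ τ ≤ T - θ from ⟨hST, h2⟩), min_eq_right (by linarith)]
        ring
      · rw [if_neg (fun h : N.IsSTPath p ∧ τ ≤ T - θ => h2 h.2),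
          min_eq_left (by linarith [not_le.mp h2])]
        ring
    · have e1 : Mcl (T - τ) θ τ = 0 := by
        rw [Mcl]
        apply max_eq_left
        have := min_le_right (T - τ) (θ - τ)
        linarith [not_le.mp h3]
      rw [if_neg (fun h : N.IsSTPath p ∧ τ ≤ θ => h3 h.2), e0, e1]
      by_cases h2 : τ ≤ T - θ
      · rw [if_pos (show N.IsSTPath p ∧ τ ≤ T - θ from ⟨hST, h2⟩), min_eq_right (by linarith)]
        ring
      · rw [if_neg (fun h : N.IsSTPath p ∧ τ ≤ T - θ => h2 h.2),
          min_eq_left (by linarith [not_le.mp h2])]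
        ring
  · rw [if_neg (fun h : N.IsSTPath p ∧ τ ≤ T => h1 h.2),
      if_neg (fun h : N.IsSTPath p ∧ τ ≤ T => h1 h.2),
      if_neg (fun h : N.IsSTPath p ∧ τ ≤ T - θ => h1 (le_trans h.2 (by linarith))),
      if_neg (fun h : N.IsSTPath p ∧ τ ≤ θ => h1 (le_trans h.2 hθT))]
    ring

open scoped Classical in
lemma arrTR_nonneg (N : Network V A) {y : List A → ℝ} (hy : N.IsDecomposition y)
    (θ : ℝ) : 0 ≤ N.arrTR y θ := by
  rw [N.arrTR_repr hy θ]
  apply Finset.sum_nonneg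
  intro p _
  split_ifs with h
  · exact mul_nonneg (hy.1 p) (by linarith [h.2])
  · exact le_refl 0

open scoped Classical in
lemma arrTR_eq_trValue (N : Network V A) {y : List A → ℝ} (hy : N.IsDecomposition y)
    (T : ℝ) : N.arrTR y T = N.trValue y T := by
  rw [N.arrTR_repr hy T, N.trValue_repr hy T]

open scoped Classical in
lemma arrTR_at_zero (N : Network V A) {y : List A → ℝ} (hy : N.IsDecomposition y) :
    N.arrTR y 0 = 0 := by
  rw [N.arrTR_repr hy 0]
  apply Finset.sum_eq_zero
  intro p _
  split_ifs with h
  · have h1 : (0:ℝ) ≤ (N.pathTime p : ℝ) := Nat.cast_nonneg _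
    have h2 : (N.pathTime p : ℝ) ≤ 0 := h.2
    have : (0:ℝ) - (N.pathTime p : ℝ) = 0 := by linarith
    rw [this, mul_zero]
  · rfl

end Network
open Network

/-- on a unit-cost network with time horizon `T`, if a maximum-value
temporally repeated flow (given by its decomposition `y`) has the earliest arrival
property — for every `θ ∈ [0, T]` the amount of flow arrived at the sink by time `θ`
is maximum among all feasible flows over time with horizon `T` — then it has minimum
peak cost among all maximum-value temporally repeated flows with horizon `T`. -/
theorem stmt18 {V A : Type} [DecidableEq V] [DecidableEq A] [Fintype A]
    (N : Network V A) (hc : ∀ a, N.c a = 1) (T : ℕ)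
    (y : List A → ℝ) (hy : N.IsDecomposition y)
    (hmaxval : ∀ y', N.IsDecomposition y' →
      N.trValue y' (T : ℝ) ≤ N.trValue y (T : ℝ))
    (hEA : ∀ θ ∈ Set.Icc (0 : ℝ) (T : ℝ), ∀ g : A → ℝ → ℝ,
      N.IsFlowOverTime (T : ℝ) g → N.arrivedBy g θ ≤ N.arrTR y θ) :
    ∀ y', N.IsDecomposition y' → N.trValue y' (T : ℝ) = N.trValue y (T : ℝ) →
      N.trPeakCost y (T : ℝ) ≤ N.trPeakCost y' (T : ℝ) := by
  intro y' hy' hval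
  rw [trPeakCost, trPeakCost, peakCost, peakCost]
  rcases Nat.eq_zero_or_pos T with hT0 | hTpos
  · subst hT0
    simp
  · have hT : (0:ℝ) < (T:ℝ) := by exact_mod_cast hTpos
    have hEAarr : ∀ ξ, 0 ≤ ξ → ξ ≤ (T:ℝ) → N.arrTR y' ξ ≤ N.arrTR y ξ := by
      intro ξ h0 h1
      rw [← N.arrived_eq_arrTR hy' (T:ℝ) h0 h1]
      exact hEA ξ ⟨h0, h1⟩ _ (N.trFOT hy' (T:ℝ))
    have key : ∀ θ ∈ Set.Ico (0:ℝ) (T:ℝ),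
        N.costAt (N.trRate y (T:ℝ)) θ ≤ N.costAt (N.trRate y' (T:ℝ)) θ := by
      intro θ hθ
      rw [N.costAt_formula hy hc (T:ℝ) hθ.1 (le_of_lt hθ.2),
        N.costAt_formula hy' hc (T:ℝ) hθ.1 (le_of_lt hθ.2), hval]
      have h1 := hEAarr θ hθ.1 (le_of_lt hθ.2)
      have h2 := hEAarr ((T:ℝ) - θ) (by linarith [hθ.2]) (by linarith [hθ.1])
      linarith
    have hbdd : BddAbove (N.costAt (N.trRate y' (T:ℝ)) '' Set.Ico 0 (T:ℝ)) := by
      refine ⟨N.trValue y (T:ℝ), ?_⟩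
      rintro x ⟨θ, hθ, rfl⟩
      rw [N.costAt_formula hy' hc (T:ℝ) hθ.1 (le_of_lt hθ.2), hval]
      have h1 := N.arrTR_nonneg hy' θ
      have h2 := N.arrTR_nonneg hy' ((T:ℝ) - θ)
      linarith
    apply Real.sSup_le
    · rintro x ⟨θ, hθ, rfl⟩
      exact le_trans (key θ hθ) (le_csSup hbdd (Set.mem_image_of_mem _ hθ))
    · have h0mem : N.costAt (N.trRate y' (T:ℝ)) 0
          ∈ N.costAt (N.trRate y' (T:ℝ)) '' Set.Ico 0 (T:ℝ) :=
        Set.mem_image_of_mem _ (⟨le_refl 0, hT⟩ : (0:ℝ) ∈ Set.Ico 0 (T:ℝ))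
      have h00 : 0 ≤ N.costAt (N.trRate y' (T:ℝ)) 0 := by
        rw [N.costAt_formula hy' hc (T:ℝ) (le_refl 0) (le_of_lt hT), sub_zero,
          N.arrTR_eq_trValue hy' (T:ℝ), N.arrTR_at_zero hy']
        linarith
      exact le_trans h00 (le_csSup hbdd h0mem)
end
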